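/- arXiv:math/9904126 — 7 statements merged into one kernel-verified Lean document; each statement's English description precedes it below -/
import Mathlib

section
/- Let t, q be complex numbers with 0 < |q| < |t| < 1. Then all denominators 1 - t^{-1} q^m are nonzero, the series ∑_{m∈ℤ} t^m/(1 - t^{-1} q^m) converges absolutely, and its sum equals 0. -/
set_option maxHeartbeats 1600000

/-- The residue-vanishing computation in the proof of the key identity (11) of the paper:
for `0 < |q| < |t| < 1`, all denominators `1 - t⁻¹ q^m` are nonzero, the series
`∑_{m ∈ ℤ} t^m / (1 - t⁻¹ q^m)` converges absolutely, and its sum equals `0`. -/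
theorem residue_sum_eq_zero (q t : ℂ)
    (hq : 0 < ‖q‖) (hqt : ‖q‖ < ‖t‖)
    (ht : ‖t‖ < 1) :
    (∀ m : ℤ, 1 - t⁻¹ * q ^ m ≠ 0) ∧
    Summable (fun m : ℤ => ‖t ^ m / (1 - t⁻¹ * q ^ m)‖) ∧
    ∑' m : ℤ, t ^ m / (1 - t⁻¹ * q ^ m) = 0 := by
  have hS : 0 < ‖t‖ := hq.trans hqt
  have ht0 : t ≠ 0 := by simpa using hS.ne'
  have hq0 : q ≠ 0 := by simpa using hq.ne'
  have hA1 : ‖q‖ < 1 := hqt.trans ht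
  set A := ‖q‖ with hAdef
  set S := ‖t‖ with hSdef
  have hr1 : A / S < 1 := (div_lt_one hS).2 hqt
  have hr0 : 0 ≤ A / S := div_nonneg hq.le hS.le
  have habs : ∀ m : ℤ, ‖t⁻¹ * q ^ m‖ = S⁻¹ * A ^ m := by
    intro m; rw [norm_mul, norm_inv, norm_zpow]
  have hlt : ∀ m : ℤ, 1 ≤ m → ‖t⁻¹ * q ^ m‖ ≤ A / S := by
    intro m hm
    rw [habs]
    have h1 : A ^ m ≤ A ^ (1 : ℤ) := zpow_le_zpow_right_of_le_one₀ hq hA1.le hm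
    rw [zpow_one] at h1
    calc S⁻¹ * A ^ m ≤ S⁻¹ * A :=
          mul_le_mul_of_nonneg_left h1 (inv_nonneg.2 hS.le)
      _ = A / S := by rw [div_eq_mul_inv, mul_comm]
  have hgt : ∀ m : ℤ, m ≤ 0 → S⁻¹ ≤ ‖t⁻¹ * q ^ m‖ := by
    intro m hm
    rw [habs]
    have h1 : (1 : ℝ) ≤ A ^ m := one_le_zpow_of_nonpos₀ hq hA1.le hm
    have := mul_le_mul_of_nonneg_left h1 (inv_nonneg.2 hS.le)
    simpa using this
  have hS1 : (1 : ℝ) < S⁻¹ := by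
    rw [lt_inv_comm₀ one_pos hS]; simpa using ht
  -- denominators nonzero
  have hne : ∀ m : ℤ, 1 - t⁻¹ * q ^ m ≠ 0 := by
    intro m h
    have hx : t⁻¹ * q ^ m = 1 := by
      have := sub_eq_zero.1 h; exact this.symm
    have hxa : ‖t⁻¹ * q ^ m‖ = 1 := by rw [hx]; simp
    rcases le_or_gt m 0 with hm | hm
    · have := hgt m hm; rw [hxa] at this; linarith
    · have := hlt m hm; rw [hxa] at this; linarith
  refine ⟨hne, ?_, ?_⟩
  · apply Summable.of_nat_of_neg
    · -- positive part: shift by one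
      rw [← summable_nat_add_iff 1]
      apply Summable.of_nonneg_of_le (fun n => norm_nonneg _)
        (f := fun n : ℕ => (S / (1 - A / S)) * S ^ n)
      · intro n
        set m : ℤ := ((n + 1 : ℕ) : ℤ) with hm
        have hm1 : 1 ≤ m := by omega
        have hxlt : ‖t⁻¹ * q ^ m‖ ≤ A / S := hlt m hm1
        have hD : 1 - A / S ≤ ‖1 - t⁻¹ * q ^ m‖ := by
          have h1 : ‖(1 : ℂ)‖ - ‖t⁻¹ * q ^ m‖ ≤ ‖1 - t⁻¹ * q ^ m‖ := norm_sub_norm_le _ _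
          simp only [norm_one] at h1
          linarith
        have hDpos : (0 : ℝ) < 1 - A / S := by linarith
        have hnum : ‖t ^ m‖ = S * S ^ n := by
          rw [norm_zpow, ← hSdef, hm]
          push_cast
          rw [zpow_add₀ (ne_of_gt hS), zpow_natCast, zpow_one, mul_comm]
        rw [norm_div, hnum]
        rw [div_le_iff₀ (lt_of_lt_of_le hDpos hD)]
        have hSA : S - A ≠ 0 := by linarith
        have : S / (1 - A / S) * S ^ n * (1 - A / S) = S * S ^ n := by
          field_simp
        calc S * S ^ n = S / (1 - A / S) * S ^ n * (1 - A / S) := this.symm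
          _ ≤ S / (1 - A / S) * S ^ n * ‖1 - t⁻¹ * q ^ m‖ := by
              apply mul_le_mul_of_nonneg_left hD
              positivity
      · exact (summable_geometric_of_lt_one hS.le ht).mul_left _
    · -- negative part
      apply Summable.of_nonneg_of_le (fun n => norm_nonneg _)
        (f := fun n : ℕ => (S / (1 - S)) * (A / S) ^ n)
      · intro n
        set m : ℤ := -(n : ℤ) with hm
        have hm0 : m ≤ 0 := by omega
        have hxgt : S⁻¹ ≤ ‖t⁻¹ * q ^ m‖ := hgt m hm0
        set x := t⁻¹ * q ^ m with hx
        have hxa : ‖x‖ = S⁻¹ * A ^ m := by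
          rw [hx, norm_mul, norm_inv, norm_zpow, hSdef, hAdef]
        have hD : ‖x‖ - 1 ≤ ‖1 - x‖ := by
          have h1 : ‖x‖ - ‖(1 : ℂ)‖ ≤ ‖x - 1‖ := norm_sub_norm_le _ _
          rw [norm_sub_rev] at h1
          simp only [norm_one] at h1
          linarith
        have hD2 : ‖x‖ * (1 - S) ≤ ‖1 - x‖ := by
          have hxS : 1 ≤ ‖x‖ * S := by
            have h2 := mul_le_mul_of_nonneg_right hxgt hS.le
            rwa [inv_mul_cancel₀ (ne_of_gt hS)] at h2
          nlinarith [norm_nonneg x]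
        have hDpos : (0 : ℝ) < ‖x‖ * (1 - S) := by
          have : (0:ℝ) < ‖x‖ := lt_of_lt_of_le (inv_pos.2 hS) hxgt
          nlinarith
        have hnum : ‖t ^ m‖ = (S ^ n)⁻¹ := by
          rw [norm_zpow, ← hSdef, hm, zpow_neg, zpow_natCast]
        rw [norm_div, hnum]
        calc (S ^ n)⁻¹ / ‖1 - x‖
            ≤ (S ^ n)⁻¹ / (‖x‖ * (1 - S)) := by
              apply div_le_div_of_nonneg_left (by positivity) hDpos hD2
          _ = (S / (1 - S)) * (A / S) ^ n := by
              rw [hxa, hm, zpow_neg, zpow_natCast, div_pow]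
              field_simp
      · exact (summable_geometric_of_lt_one hr0 hr1).mul_left _

  · set F : ℤ → ℂ := fun m => t ^ m / (1 - t⁻¹ * q ^ m) with hF
    set G : ℕ × ℕ → ℂ := fun p => t ^ ((p.1 : ℤ) + 1 - p.2) * q ^ (((p.1 : ℤ) + 1) * p.2) with hG
    -- summability of G
    have hGsum : Summable G := by
      apply Summable.of_norm_bounded (g := fun p : ℕ × ℕ => (S * S ^ p.1) * ((A / S) ^ p.2))
      · exact Summable.mul_of_nonneg ((summable_geometric_of_lt_one hS.le ht).mul_left S)
          (summable_geometric_of_lt_one hr0 hr1)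
          (fun a => by positivity) (fun b => by positivity)
      · rintro ⟨a, b⟩
        have h1 : ‖G (a, b)‖ = S ^ ((a:ℤ) + 1 - b) * A ^ (((a:ℤ) + 1) * b) := by
          simp only [hG, norm_mul, norm_zpow, hSdef, hAdef]
        have e1 : S ^ ((a:ℤ) + 1 - b) = S ^ (a + 1) / S ^ b := by
          rw [show ((a:ℤ) + 1 - (b:ℤ)) = ((a + 1 : ℕ) : ℤ) - ((b : ℕ) : ℤ) by push_cast; ring,
            zpow_sub₀ (ne_of_gt hS), zpow_natCast, zpow_natCast]
        have e2 : A ^ (((a:ℤ) + 1) * b) = (A ^ (a + 1)) ^ b := by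
          rw [show ((a:ℤ) + 1) * (b:ℤ) = (((a + 1) * b : ℕ) : ℤ) by push_cast; ring,
            zpow_natCast, pow_mul]
        have e3 : S ^ (a + 1) / S ^ b * (A ^ (a + 1)) ^ b = (S * S ^ a) * (A ^ (a + 1) / S) ^ b := by
          rw [div_pow, pow_succ]
          field_simp
        rw [h1, e1, e2, e3]
        apply mul_le_mul_of_nonneg_left _ (by positivity)
        apply pow_le_pow_left₀ (by positivity)
        apply (div_le_div_iff_of_pos_right hS).2
        calc A ^ (a + 1) = A ^ a * A := pow_succ A a
          _ ≤ 1 * A := mul_le_mul_of_nonneg_right (pow_le_one₀ hq.le hA1.le) hq.le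
          _ = A := one_mul A
    -- positive fibers
    have hfib1 : ∀ a : ℕ, HasSum (fun b : ℕ => G (a, b)) (F ((a:ℤ) + 1)) := by
      intro a
      have hx : ‖t⁻¹ * q ^ ((a:ℤ) + 1)‖ < 1 := by
        exact lt_of_le_of_lt (hlt _ (by omega)) hr1
      have hgeo := (hasSum_geometric_of_norm_lt_one hx).mul_left (t ^ ((a:ℤ) + 1))
      have heq : (fun b : ℕ => t ^ ((a:ℤ) + 1) * (t⁻¹ * q ^ ((a:ℤ) + 1)) ^ b)
          = fun b : ℕ => G (a, b) := by
        funext b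
        simp only [hG]
        rw [mul_pow, inv_pow, ← zpow_natCast t b, ← zpow_neg,
          ← zpow_natCast (q ^ ((a:ℤ) + 1)) b, ← zpow_mul,
          show ((a:ℤ) + 1 - (b:ℤ)) = (a:ℤ) + 1 + (-(b:ℤ)) by ring,
          show ((a:ℤ) + 1) * (b:ℤ) = (a:ℤ) * b + b by ring,
          zpow_add₀ ht0, zpow_add₀ ht0, zpow_add₀ ht0, zpow_add₀ hq0, zpow_one]
        ring
      rw [heq] at hgeo
      simpa only [hF, div_eq_mul_inv] using hgeo
    -- negative fibers
    have hfib2 : ∀ a : ℕ, HasSum (fun b : ℕ => -G (b, a)) (F (-(a:ℤ))) := by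
      intro a
      set y : ℂ := t * q ^ (a : ℕ) with hy
      have hyn : ‖y‖ < 1 := by
        rw [hy, norm_mul, norm_pow, ← hSdef, ← hAdef]
        calc S * A ^ a ≤ S * 1 := mul_le_mul_of_nonneg_left (pow_le_one₀ hq.le hA1.le) hS.le
          _ < 1 := by simpa using ht
      have hy0 : y ≠ 0 := mul_ne_zero ht0 (pow_ne_zero _ hq0)
      have hy1 : (1 : ℂ) - y ≠ 0 := by
        intro h
        rw [sub_eq_zero] at h
        rw [← h] at hyn
        simp at hyn
      have hinv : t⁻¹ * q ^ (-(a:ℤ)) = y⁻¹ := by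
        rw [hy, mul_inv, zpow_neg, zpow_natCast]
      have hgeo := (hasSum_geometric_of_norm_lt_one hyn).mul_left (-(t ^ (-(a:ℤ)) * y))
      have heq : (fun b : ℕ => -(t ^ (-(a:ℤ)) * y) * y ^ b) = fun b : ℕ => -G (b, a) := by
        funext b
        simp only [hG]
        have hyb : y ^ b = t ^ (b:ℤ) * q ^ ((a:ℤ) * b) := by
          rw [hy, mul_pow, ← zpow_natCast t b, ← zpow_natCast (q ^ (a : ℕ)) b,
            ← zpow_natCast q a, ← zpow_mul]
        rw [hyb, hy, ← zpow_natCast q a,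
          show ((b:ℤ) + 1 - (a:ℤ)) = (b:ℤ) + 1 + (-(a:ℤ)) by ring,
          show (((b:ℤ) + 1) * (a:ℤ)) = (a:ℤ) * (b:ℤ) + (a:ℤ) by ring,
          zpow_add₀ ht0, zpow_add₀ ht0, zpow_add₀ hq0, zpow_one]
        ring
      have hval : -(t ^ (-(a:ℤ)) * y) * (1 - y)⁻¹ = F (-(a:ℤ)) := by
        simp only [hF]
        rw [hinv,
          show (1:ℂ) - y⁻¹ = (y - 1) * y⁻¹ from by rw [sub_mul, mul_inv_cancel₀ hy0, one_mul],
          show y - (1:ℂ) = -(1 - y) from by ring,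
          div_eq_mul_inv, mul_inv, inv_inv, inv_neg]
        ring
      rw [heq, hval] at hgeo
      exact hgeo
    have hPos : HasSum (fun a : ℕ => F ((a:ℤ) + 1)) (∑' p, G p) :=
      hGsum.hasSum.prod_fiberwise hfib1
    have hswap : HasSum (fun p : ℕ × ℕ => G (p.2, p.1)) (∑' p, G p) :=
      ((Equiv.prodComm ℕ ℕ).hasSum_iff (f := G)).2 hGsum.hasSum
    have hNeg : HasSum (fun a : ℕ => F (-(a:ℤ))) (-(∑' p, G p)) :=
      hswap.neg.prod_fiberwise (fun a => hfib2 a)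
    set P : ℂ := ∑' p, G p with hP
    have h0 : HasSum (fun n : ℕ => F (n : ℤ)) (P + F 0) := by
      have h' : HasSum (fun n : ℕ => (fun k : ℕ => F (k : ℤ)) (n + 1)) P := by
        convert hPos using 2 with n
        simp
      have h2 := (hasSum_nat_add_iff (f := fun k : ℕ => F (k : ℤ)) 1).1 h'
      simpa using h2
    have h0' : HasSum (fun n : ℕ => F (-((n : ℤ) + 1))) (-P - F 0) := by
      have h2 : HasSum (fun n : ℕ => (fun k : ℕ => F (-(k : ℤ))) (n + 1)) (-P - F 0) := by
        apply (hasSum_nat_add_iff (f := fun k : ℕ => F (-(k : ℤ))) 1).2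
        have : -P - F 0 + ∑ i ∈ Finset.range 1, F (-(i : ℤ)) = -P := by
          simp
        rw [this]
        exact hNeg
      convert h2 using 2 with n
      simp
    have htotal : HasSum F (P + F 0 + (-P - F 0)) := HasSum.of_nat_of_neg_add_one h0 h0'
    have hz : P + F 0 + (-P - F 0) = 0 := by ring
    rw [hz] at htotal
    exact htotal.tsum_eq
end

section
/- Let q, t, y be complex numbers with 0 < |q| < |t| < 1 and y ≠ 0, such that y·q^m ≠ 1 for every integer m, and t·y·q^{k-1} ≠ 1 and t^{-1}·y^{-1}·q^k ≠ 1 for every integer k ≥ 1. Define L(y) = ∏_{k≥1} [(1 - t y q^{k-1})(1 - t^{-1} y^{-1} q^k)] / [(1 - t q^{k-1})(1 - t^{-1} q^k)] and R(y) = (∑_{m∈ℤ} t^m/(1 - y q^m)) · G(y,q), where G(y,q) = ∏_{k≥1} (1 - y q^{k-1})(1 - y^{-1} q^k)/(1 - q^k)^2. Then L(yq) = -t^{-1} y^{-1} L(y) and R(yq) = -t^{-1} y^{-1} R(y), i.e., both sides of identity (11) acquire the factor -t^{-1} y^{-1} under the substitution y ↦ yq. -/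
open Complex Filter

/-- `Gfun y q = ∏_{k ≥ 1} (1 - y q^{k-1})(1 - y⁻¹ q^k) / (1 - q^k)^2`. -/
noncomputable def Gfun (y q : ℂ) : ℂ :=
  ∏' k : ℕ, ((1 - y * q ^ k) * (1 - y⁻¹ * q ^ (k + 1))) / (1 - q ^ (k + 1)) ^ 2

/-- The left-hand side of identity (11):
`L(y) = ∏_{k ≥ 1} (1 - t y q^{k-1})(1 - t⁻¹ y⁻¹ q^k) / ((1 - t q^{k-1})(1 - t⁻¹ q^k))`. -/
noncomputable def Lfun (t q y : ℂ) : ℂ :=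
  ∏' k : ℕ, ((1 - t * y * q ^ k) * (1 - t⁻¹ * y⁻¹ * q ^ (k + 1))) /
    ((1 - t * q ^ k) * (1 - t⁻¹ * q ^ (k + 1)))

/-- The right-hand side of identity (11):
`R(y) = (∑_{m ∈ ℤ} t^m / (1 - y q^m)) ⬝ G(y,q)`. -/
noncomputable def Rfun (t q y : ℂ) : ℂ :=
  (∑' m : ℤ, t ^ m / (1 - y * q ^ m)) * Gfun y q

private lemma summable_log_aux {q : ℂ} (hq : ‖q‖ < 1) (c : ℂ) :
    Summable (fun k : ℕ => Complex.log (1 - c * q ^ k)) := by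
  have hgeo : Summable (fun k : ℕ => (3 / 2 : ℝ) * (‖c‖ * ‖q‖ ^ k)) :=
    ((summable_geometric_of_lt_one (norm_nonneg q) hq).mul_left ‖c‖).mul_left _
  refine Summable.of_norm_bounded_eventually hgeo ?_
  rw [Nat.cofinite_eq_atTop]
  have h0 : Tendsto (fun k : ℕ => ‖c‖ * ‖q‖ ^ k) atTop (nhds 0) := by
    simpa using (tendsto_pow_atTop_nhds_zero_of_lt_one (norm_nonneg q) hq).const_mul ‖c‖
  filter_upwards [h0.eventually (eventually_le_nhds (by norm_num : (0:ℝ) < 1/2))] with k hk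
  have hnorm : ‖-(c * q ^ k)‖ = ‖c‖ * ‖q‖ ^ k := by
    rw [norm_neg, norm_mul, norm_pow]
  have hb := Complex.norm_log_one_add_half_le_self (z := -(c * q ^ k)) (by rw [hnorm]; exact hk)
  rw [← sub_eq_add_neg] at hb
  calc ‖Complex.log (1 - c * q ^ k)‖ ≤ 3 / 2 * ‖-(c * q ^ k)‖ := hb
    _ = 3 / 2 * (‖c‖ * ‖q‖ ^ k) := by rw [hnorm]

private lemma multipliable_aux {q : ℂ} (hq : ‖q‖ < 1) {c : ℂ}
    (hc : ∀ k : ℕ, 1 - c * q ^ k ≠ 0) :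
    Multipliable (fun k : ℕ => 1 - c * q ^ k) :=
  Complex.multipliable_of_summable_log (summable_log_aux hq c)

private lemma tprod_ne_zero_aux {q : ℂ} (hq : ‖q‖ < 1) {c : ℂ}
    (hc : ∀ k : ℕ, 1 - c * q ^ k ≠ 0) :
    (∏' k : ℕ, (1 - c * q ^ k)) ≠ 0 := by
  rw [← Complex.cexp_tsum_eq_tprod (f := fun k : ℕ => 1 - c * q ^ k) hc (summable_log_aux hq c)]
  exact Complex.exp_ne_zero _

private lemma shift_aux {q : ℂ} (hq : ‖q‖ < 1) {c : ℂ}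
    (hc : ∀ k : ℕ, 1 - c * q * q ^ k ≠ 0) :
    (∏' k : ℕ, (1 - c * q ^ k)) = (1 - c) * ∏' k : ℕ, (1 - c * q * q ^ k) := by
  have hm : Multipliable (fun k : ℕ => 1 - c * q * q ^ k) := multipliable_aux hq (c := c * q) hc
  have hm2 : Multipliable (fun k : ℕ => 1 - c * q ^ (k + 1)) :=
    hm.congr fun k => by ring
  have h3 := tprod_eq_zero_mul' (f := fun k : ℕ => 1 - c * q ^ k) hm2
  rw [h3, pow_zero, mul_one]
  congr 1
  exact tprod_congr fun k => by ring

private lemma hasProd_div_aux {f g : ℕ → ℂ} {P Q : ℂ} (hf : HasProd f P) (hg : HasProd g Q)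
    (hQ : Q ≠ 0) : HasProd (fun k => f k / g k) (P / Q) := by
  have h := Filter.Tendsto.div hf hg hQ
  exact h.congr fun s => (Finset.prod_div_distrib _ _).symm

private lemma tprod_div_formula {q : ℂ} (hq : ‖q‖ < 1) {a b c d : ℂ}
    (ha : ∀ k : ℕ, 1 - a * q ^ k ≠ 0) (hb : ∀ k : ℕ, 1 - b * q ^ k ≠ 0)
    (hc : ∀ k : ℕ, 1 - c * q ^ k ≠ 0) (hd : ∀ k : ℕ, 1 - d * q ^ k ≠ 0) :
    ∏' k : ℕ, ((1 - a * q ^ k) * (1 - b * q ^ k) / ((1 - c * q ^ k) * (1 - d * q ^ k)))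
      = (∏' k : ℕ, (1 - a * q ^ k)) * (∏' k : ℕ, (1 - b * q ^ k)) /
        ((∏' k : ℕ, (1 - c * q ^ k)) * (∏' k : ℕ, (1 - d * q ^ k))) := by
  have hN := (multipliable_aux hq ha).hasProd.mul (multipliable_aux hq hb).hasProd
  have hD := (multipliable_aux hq hc).hasProd.mul (multipliable_aux hq hd).hasProd
  exact (hasProd_div_aux hN hD
    (mul_ne_zero (tprod_ne_zero_aux hq hc) (tprod_ne_zero_aux hq hd))).tprod_eq

private lemma one_sub_ne {z : ℂ} (hz : ‖z‖ < 1) : 1 - z ≠ 0 := by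
  intro h
  have hz1 : z = 1 := by linear_combination -h
  rw [hz1] at hz
  simp at hz

/-- Double periodicity (the main step of the paper's elementary proof of identity (11)):
under the substitution `y ↦ y q`, both sides of (11) acquire the factor `-t⁻¹ y⁻¹`. -/
theorem both_sides_quasi_periodic (q t y : ℂ)
    (hq : 0 < ‖q‖) (hqt : ‖q‖ < ‖t‖)
    (ht : ‖t‖ < 1) (hy : y ≠ 0)
    (hyq : ∀ m : ℤ, y * q ^ m ≠ 1)
    (hty : ∀ k : ℕ, 1 ≤ k → t * y * q ^ (k - 1) ≠ 1 ∧ t⁻¹ * y⁻¹ * q ^ k ≠ 1) :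
    Lfun t q (y * q) = -t⁻¹ * y⁻¹ * Lfun t q y ∧
    Rfun t q (y * q) = -t⁻¹ * y⁻¹ * Rfun t q y := by
  have hq' : 0 < ‖q‖ := hq
  have hqt' : ‖q‖ < ‖t‖ := hqt
  have ht' : ‖t‖ < 1 := ht
  have hnq1 : ‖q‖ < 1 := hqt'.trans ht'
  have hq0 : q ≠ 0 := norm_pos_iff.mp hq'
  have ht0 : t ≠ 0 := norm_pos_iff.mp (hq'.trans hqt')
  have hqk : ∀ k : ℕ, ‖q‖ ^ k ≤ 1 := fun k => pow_le_one₀ (norm_nonneg q) hnq1.le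
  -- nonvanishing of the factors
  have hA : ∀ k : ℕ, 1 - t * y * q ^ k ≠ 0 := fun k => by
    refine sub_ne_zero_of_ne (Ne.symm ?_)
    simpa using (hty (k + 1) (by omega)).1
  have hAq : ∀ k : ℕ, 1 - t * y * q * q ^ k ≠ 0 := fun k => by
    rw [show t * y * q * q ^ k = t * y * q ^ (k + 1) from by ring]
    refine sub_ne_zero_of_ne (Ne.symm ?_)
    simpa using (hty (k + 2) (by omega)).1
  have hB : ∀ k : ℕ, 1 - t⁻¹ * y⁻¹ * q * q ^ k ≠ 0 := fun k => by
    rw [show t⁻¹ * y⁻¹ * q * q ^ k = t⁻¹ * y⁻¹ * q ^ (k + 1) from by ring]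
    exact sub_ne_zero_of_ne (Ne.symm (hty (k + 1) (by omega)).2)
  have hB0 : ∀ k : ℕ, 1 - t⁻¹ * y⁻¹ * q ^ k ≠ 0 := fun k => by
    rcases Nat.eq_zero_or_pos k with h0 | h1
    · subst h0
      have hty1 : t * y ≠ 1 := by simpa using (hty 1 le_rfl).1
      refine sub_ne_zero_of_ne (Ne.symm ?_)
      rw [pow_zero, mul_one, ← mul_inv, Ne, inv_eq_one]
      exact fun h => hty1 h
    · exact sub_ne_zero_of_ne (Ne.symm (hty k h1).2)
  have hC : ∀ k : ℕ, 1 - t * q ^ k ≠ 0 := fun k => by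
    refine one_sub_ne ?_
    rw [norm_mul, norm_pow]
    calc ‖t‖ * ‖q‖ ^ k ≤ ‖t‖ * 1 := by
          exact mul_le_mul_of_nonneg_left (hqk k) (norm_nonneg t)
      _ < 1 := by rwa [mul_one]
  have hD : ∀ k : ℕ, 1 - t⁻¹ * q * q ^ k ≠ 0 := fun k => by
    refine one_sub_ne ?_
    rw [norm_mul, norm_mul, norm_inv, norm_pow]
    have h1 : ‖q‖ * ‖q‖ ^ k ≤ ‖q‖ := mul_le_of_le_one_right hq'.le (hqk k)
    calc ‖t‖⁻¹ * ‖q‖ * ‖q‖ ^ k = (‖q‖ * ‖q‖ ^ k) / ‖t‖ := by ring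
      _ < 1 := (div_lt_one (hq'.trans hqt')).mpr (lt_of_le_of_lt h1 hqt')
  have hQ : ∀ k : ℕ, 1 - q * q ^ k ≠ 0 := fun k => by
    refine one_sub_ne ?_
    rw [norm_mul, norm_pow]
    exact lt_of_le_of_lt (mul_le_of_le_one_right hq'.le (hqk k)) hnq1
  have hY : ∀ k : ℕ, 1 - y * q ^ k ≠ 0 := fun k => by
    refine sub_ne_zero_of_ne (Ne.symm ?_)
    simpa [zpow_natCast] using hyq (k : ℤ)
  have hYq : ∀ k : ℕ, 1 - y * q * q ^ k ≠ 0 := fun k => by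
    rw [show y * q * q ^ k = y * q ^ (k + 1) from by ring]
    refine sub_ne_zero_of_ne (Ne.symm ?_)
    simpa only [zpow_natCast] using hyq ((k + 1 : ℕ) : ℤ)
  have hYinv : ∀ n : ℕ, 1 - y⁻¹ * q ^ n ≠ 0 := fun n => by
    refine sub_ne_zero_of_ne (Ne.symm ?_)
    intro hcon
    have h1 : y = q ^ n := (inv_mul_eq_one₀ hy).mp hcon
    exact hyq (-(n : ℤ))
      (by rw [zpow_neg, zpow_natCast, h1, mul_inv_cancel₀ (pow_ne_zero n hq0)])
  have hYiq : ∀ k : ℕ, 1 - y⁻¹ * q * q ^ k ≠ 0 := fun k => by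
    rw [show y⁻¹ * q * q ^ k = y⁻¹ * q ^ (k + 1) from by ring]
    exact hYinv (k + 1)
  have h1ty : (1 : ℂ) - t * y ≠ 0 := by simpa using hA 0
  have h1y : (1 : ℂ) - y ≠ 0 := by simpa using hY 0
  have hPc : (∏' k : ℕ, (1 - t * q ^ k)) ≠ 0 := tprod_ne_zero_aux hnq1 hC
  have hPd : (∏' k : ℕ, (1 - t⁻¹ * q * q ^ k)) ≠ 0 := tprod_ne_zero_aux hnq1 hD
  have hPq : (∏' k : ℕ, (1 - q * q ^ k)) ≠ 0 := tprod_ne_zero_aux hnq1 hQ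
  constructor
  · -- the product side
    have eL1 : Lfun t q (y * q)
        = (∏' k : ℕ, (1 - t * y * q * q ^ k)) * (∏' k : ℕ, (1 - t⁻¹ * y⁻¹ * q ^ k)) /
          ((∏' k : ℕ, (1 - t * q ^ k)) * (∏' k : ℕ, (1 - t⁻¹ * q * q ^ k))) := by
      unfold Lfun
      rw [show (fun k : ℕ => (1 - t * (y * q) * q ^ k) * (1 - t⁻¹ * (y * q)⁻¹ * q ^ (k + 1)) /
            ((1 - t * q ^ k) * (1 - t⁻¹ * q ^ (k + 1))))
          = (fun k : ℕ => (1 - t * y * q * q ^ k) * (1 - t⁻¹ * y⁻¹ * q ^ k) /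
            ((1 - t * q ^ k) * (1 - t⁻¹ * q * q ^ k))) from funext fun k => by
        rw [mul_inv, show t⁻¹ * (y⁻¹ * q⁻¹) * q ^ (k + 1) = t⁻¹ * y⁻¹ * q ^ k * (q⁻¹ * q)
          from by ring, inv_mul_cancel₀ hq0, mul_one]
        ring]
      exact tprod_div_formula hnq1 hAq hB0 hC hD
    have eL2 : Lfun t q y
        = (∏' k : ℕ, (1 - t * y * q ^ k)) * (∏' k : ℕ, (1 - t⁻¹ * y⁻¹ * q * q ^ k)) /
          ((∏' k : ℕ, (1 - t * q ^ k)) * (∏' k : ℕ, (1 - t⁻¹ * q * q ^ k))) := by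
      unfold Lfun
      rw [show (fun k : ℕ => (1 - t * y * q ^ k) * (1 - t⁻¹ * y⁻¹ * q ^ (k + 1)) /
            ((1 - t * q ^ k) * (1 - t⁻¹ * q ^ (k + 1))))
          = (fun k : ℕ => (1 - t * y * q ^ k) * (1 - t⁻¹ * y⁻¹ * q * q ^ k) /
            ((1 - t * q ^ k) * (1 - t⁻¹ * q * q ^ k))) from funext fun k => by ring]
      exact tprod_div_formula hnq1 hA hB hC hD
    have sA : (∏' k : ℕ, (1 - t * y * q ^ k))
        = (1 - t * y) * ∏' k : ℕ, (1 - t * y * q * q ^ k) := shift_aux hnq1 hAq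
    have sB : (∏' k : ℕ, (1 - t⁻¹ * y⁻¹ * q ^ k))
        = (1 - t⁻¹ * y⁻¹) * ∏' k : ℕ, (1 - t⁻¹ * y⁻¹ * q * q ^ k) := shift_aux hnq1 hB
    rw [eL1, eL2, sA, sB]
    simp only [← mul_div_assoc]
    congr 1
    field_simp
    ring
  · -- the sum side
    have hsum : (∑' m : ℤ, t ^ m / (1 - y * q * q ^ m))
        = t⁻¹ * ∑' m : ℤ, t ^ m / (1 - y * q ^ m) := by
      calc ∑' m : ℤ, t ^ m / (1 - y * q * q ^ m)
          = ∑' m : ℤ, t ^ (m + 1 - 1) / (1 - y * q ^ (m + 1)) := by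
            refine tsum_congr fun m => ?_
            rw [add_sub_cancel_right, zpow_add_one₀ hq0]
            ring
        _ = ∑' m : ℤ, t ^ (m - 1) / (1 - y * q ^ m) :=
            (Equiv.addRight (1 : ℤ)).tsum_eq (fun m => t ^ (m - 1) / (1 - y * q ^ m))
        _ = ∑' m : ℤ, t⁻¹ * (t ^ m / (1 - y * q ^ m)) := by
            refine tsum_congr fun m => ?_
            rw [zpow_sub_one₀ ht0]
            ring
        _ = t⁻¹ * ∑' m : ℤ, t ^ m / (1 - y * q ^ m) := tsum_mul_left
    have eG1 : Gfun (y * q) q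
        = (∏' k : ℕ, (1 - y * q * q ^ k)) * (∏' k : ℕ, (1 - y⁻¹ * q ^ k)) /
          ((∏' k : ℕ, (1 - q * q ^ k)) * (∏' k : ℕ, (1 - q * q ^ k))) := by
      unfold Gfun
      rw [show (fun k : ℕ => (1 - y * q * q ^ k) * (1 - (y * q)⁻¹ * q ^ (k + 1)) /
            (1 - q ^ (k + 1)) ^ 2)
          = (fun k : ℕ => (1 - y * q * q ^ k) * (1 - y⁻¹ * q ^ k) /
            ((1 - q * q ^ k) * (1 - q * q ^ k))) from funext fun k => by
        rw [mul_inv, show y⁻¹ * q⁻¹ * q ^ (k + 1) = y⁻¹ * q ^ k * (q⁻¹ * q)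
          from by ring, inv_mul_cancel₀ hq0, mul_one]
        ring]
      exact tprod_div_formula hnq1 hYq hYinv hQ hQ
    have eG2 : Gfun y q
        = (∏' k : ℕ, (1 - y * q ^ k)) * (∏' k : ℕ, (1 - y⁻¹ * q * q ^ k)) /
          ((∏' k : ℕ, (1 - q * q ^ k)) * (∏' k : ℕ, (1 - q * q ^ k))) := by
      unfold Gfun
      rw [show (fun k : ℕ => (1 - y * q ^ k) * (1 - y⁻¹ * q ^ (k + 1)) /
            (1 - q ^ (k + 1)) ^ 2)
          = (fun k : ℕ => (1 - y * q ^ k) * (1 - y⁻¹ * q * q ^ k) /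
            ((1 - q * q ^ k) * (1 - q * q ^ k))) from funext fun k => by ring]
      exact tprod_div_formula hnq1 hY hYiq hQ hQ
    have sY : (∏' k : ℕ, (1 - y * q ^ k))
        = (1 - y) * ∏' k : ℕ, (1 - y * q * q ^ k) := shift_aux hnq1 hYq
    have sYi : (∏' k : ℕ, (1 - y⁻¹ * q ^ k))
        = (1 - y⁻¹) * ∏' k : ℕ, (1 - y⁻¹ * q * q ^ k) := shift_aux hnq1 hYiq
    unfold Rfun
    rw [hsum, eG1, eG2, sY, sYi]
    simp only [← mul_div_assoc]
    congr 1
    field_simp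
    ring
end

section
/- For all complex numbers x, y with |x| < 1 and |y| < 1, the double series ∑ (-1)^{a+b} x^a y^b, taken over all pairs of positive integers (a,b) such that min(a,b) is odd, converges absolutely and equals x y / [(1 + x)(1 + y)(1 + x y)]. -/
/-- The expansion used in the paper's elementary proof of the ℙ² identity: for `|x| < 1` and
`|y| < 1`, the double series `∑ (-1)^{a+b} x^a y^b`, over all pairs of positive integers
`(a,b)` with `min(a,b)` odd, converges absolutely and equals
`x y / ((1+x)(1+y)(1+xy))`. -/
theorem xy_expansion (x y : ℂ) (hx : ‖x‖ < 1) (hy : ‖y‖ < 1) :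
    Summable (fun p : {p : ℕ × ℕ // 0 < p.1 ∧ 0 < p.2 ∧ Odd (min p.1 p.2)} =>
      ‖(-1 : ℂ) ^ (p.1.1 + p.1.2) * x ^ p.1.1 * y ^ p.1.2‖) ∧
    (∑' p : {p : ℕ × ℕ // 0 < p.1 ∧ 0 < p.2 ∧ Odd (min p.1 p.2)},
        (-1 : ℂ) ^ (p.1.1 + p.1.2) * x ^ p.1.1 * y ^ p.1.2) =
      x * y / ((1 + x) * (1 + y) * (1 + x * y)) := by
  have hx' : ‖x‖ < 1 := hx
  have hy' : ‖y‖ < 1 := hy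
  set f : ℕ × ℕ → ℂ := fun p => (-x) ^ p.1 * (-y) ^ p.2 with hf_def
  have hterm : ∀ p : ℕ × ℕ,
      (-1 : ℂ) ^ (p.1 + p.2) * x ^ p.1 * y ^ p.2 = f p := by
    intro p
    show _ = (-x) ^ p.1 * (-y) ^ p.2
    rw [neg_pow x, neg_pow y, pow_add]
    ring
  -- basic summability of norms over all of ℕ × ℕ
  have hnorm : Summable (fun p : ℕ × ℕ => ‖x‖ ^ p.1 * ‖y‖ ^ p.2) := by
    exact (summable_geometric_of_lt_one (norm_nonneg x) hx').mul_of_nonneg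
      (summable_geometric_of_lt_one (norm_nonneg y) hy')
      (fun n => pow_nonneg (norm_nonneg x) n) (fun n => pow_nonneg (norm_nonneg y) n)
  have hfn : Summable (fun p : ℕ × ℕ => ‖f p‖) := by
    refine hnorm.congr fun p => ?_
    simp [hf_def, norm_mul, norm_pow]
  have hf : Summable f := hfn.of_norm
  -- summability part
  have hS : Summable (fun p : {p : ℕ × ℕ // 0 < p.1 ∧ 0 < p.2 ∧ Odd (min p.1 p.2)} =>
      ‖(-1 : ℂ) ^ (p.1.1 + p.1.2) * x ^ p.1.1 * y ^ p.1.2‖) := by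
    have := hfn.subtype {p : ℕ × ℕ | 0 < p.1 ∧ 0 < p.2 ∧ Odd (min p.1 p.2)}
    refine this.congr fun p => ?_
    simp only [Function.comp_apply]
    rw [← hterm]
  refine ⟨hS, ?_⟩
  -- nonvanishing facts
  have hxy' : ‖x * y‖ < 1 := by
    rw [norm_mul]
    nlinarith [norm_nonneg x, norm_nonneg y]
  have hxy2 : ‖(x * y) ^ 2‖ < 1 := by
    rw [norm_pow]
    nlinarith [norm_nonneg (x * y)]
  have h1x : (1 : ℂ) + x ≠ 0 := by
    intro h
    have : x = -1 := by linear_combination h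
    rw [this] at hx'
    simp at hx'
  have h1y : (1 : ℂ) + y ≠ 0 := by
    intro h
    have : y = -1 := by linear_combination h
    rw [this] at hy'
    simp at hy'
  have h1xy : (1 : ℂ) + x * y ≠ 0 := by
    intro h
    have : x * y = -1 := by linear_combination h
    rw [this] at hxy'
    simp at hxy'
  have h1mxy : (1 : ℂ) - x * y ≠ 0 := by
    intro h
    have : x * y = 1 := by linear_combination -h
    rw [this] at hxy'
    simp at hxy'
  have h2 : (1 : ℂ) - (x * y) ^ 2 ≠ 0 := by
    have : (1 : ℂ) - (x * y) ^ 2 = (1 - x * y) * (1 + x * y) := by ring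
    rw [this]
    exact mul_ne_zero h1mxy h1xy
  -- the three parametrizing injections
  set gD : ℕ → ℕ × ℕ := fun k => (2 * k + 1, 2 * k + 1) with hgD_def
  set gU : ℕ × ℕ → ℕ × ℕ := fun q => (2 * q.1 + 1, 2 * q.1 + 2 + q.2) with hgU_def
  set gL : ℕ × ℕ → ℕ × ℕ := fun q => (2 * q.1 + 2 + q.2, 2 * q.1 + 1) with hgL_def
  have hgD_inj : Function.Injective gD := by
    intro a b h
    simp only [hgD_def, Prod.ext_iff] at h
    omega
  have hgU_inj : Function.Injective gU := by
    intro a b h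
    simp only [hgU_def, Prod.ext_iff] at h
    exact Prod.ext (by omega) (by omega)
  have hgL_inj : Function.Injective gL := by
    intro a b h
    simp only [hgL_def, Prod.ext_iff] at h
    exact Prod.ext (by omega) (by omega)
  -- decomposition of the index set
  have hSet : {p : ℕ × ℕ | 0 < p.1 ∧ 0 < p.2 ∧ Odd (min p.1 p.2)} =
      Set.range gD ∪ (Set.range gU ∪ Set.range gL) := by
    ext p
    simp only [Set.mem_setOf_eq, Set.mem_union, Set.mem_range, hgD_def, hgU_def, hgL_def,
      Prod.ext_iff, Nat.odd_iff]
    constructor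
    · rintro ⟨h1, h2, h3⟩
      rcases lt_trichotomy p.1 p.2 with h | h | h
      · right; left
        exact ⟨((p.1 - 1) / 2, p.2 - p.1 - 1), by omega, by omega⟩
      · left
        exact ⟨(p.1 - 1) / 2, by omega, by omega⟩
      · right; right
        exact ⟨((p.2 - 1) / 2, p.1 - p.2 - 1), by omega, by omega⟩
    · rintro (⟨k, h1, h2⟩ | ⟨q, h1, h2⟩ | ⟨q, h1, h2⟩) <;> omega
  have hd1 : Disjoint (Set.range gU) (Set.range gL) := by
    rw [Set.disjoint_left]
    rintro p ⟨a, rfl⟩ ⟨b, hb⟩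
    simp only [hgU_def, hgL_def, Prod.ext_iff] at hb
    omega
  have hd2 : Disjoint (Set.range gD) (Set.range gU ∪ Set.range gL) := by
    rw [Set.disjoint_left]
    rintro p ⟨a, rfl⟩ (⟨b, hb⟩ | ⟨b, hb⟩) <;>
      simp only [hgD_def, hgU_def, hgL_def, Prod.ext_iff] at hb <;> omega
  -- geometric sums
  have hgeo : ∀ z : ℂ, ‖z‖ < 1 → ∀ c : ℂ, ∑' k : ℕ, c * z ^ k = c * (1 - z)⁻¹ := by
    intro z hz c
    rw [tsum_mul_left, tsum_geometric_of_norm_lt_one hz]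
  -- key power identity
  have hkey : ∀ k : ℕ, (-x) ^ (2 * k) * (-y) ^ (2 * k) = ((x * y) ^ 2) ^ k := by
    intro k
    rw [← mul_pow, neg_mul_neg, ← pow_mul, mul_comm 2 k, pow_mul]
  -- sum over the diagonal part
  have hA : ∑' k : ℕ, f (gD k) = x * y * (1 - (x * y) ^ 2)⁻¹ := by
    have : ∀ k : ℕ, f (gD k) = (x * y) * ((x * y) ^ 2) ^ k := by
      intro k
      show (-x) ^ (2 * k + 1) * (-y) ^ (2 * k + 1) = _
      linear_combination (x * y) * hkey k
    rw [tsum_congr this, hgeo _ hxy2]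
  -- sums over the two off-diagonal parts
  have hUsum : Summable (f ∘ gU) := hf.comp_injective hgU_inj
  have hLsum : Summable (f ∘ gL) := hf.comp_injective hgL_inj
  have hB : ∑' q : ℕ × ℕ, f (gU q) =
      -(x * y ^ 2) * (1 - (x * y) ^ 2)⁻¹ * (1 - -y)⁻¹ := by
    have heU : ∀ k j : ℕ, f (gU (k, j)) =
        (-(x * y ^ 2) * ((x * y) ^ 2) ^ k) * (-y) ^ j := by
      intro k j
      show (-x) ^ (2 * k + 1) * (-y) ^ (2 * k + 2 + j) = _
      rw [pow_add (-y) (2 * k + 2) j]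
      linear_combination ((-y) ^ j * (-x) * (-y) * (-y)) * hkey k
    have h1 : ∀ k : ℕ, Summable fun j : ℕ => f (gU (k, j)) := by
      intro k
      refine Summable.congr ?_ fun j => (heU k j).symm
      exact (summable_geometric_of_norm_lt_one (x := -y) (by rw [norm_neg]; exact hy')).mul_left (-(x * y ^ 2) * ((x * y) ^ 2) ^ k)
    rw [Summable.tsum_prod' (f := fun q : ℕ × ℕ => f (gU q)) hUsum h1]
    have : ∀ k : ℕ, ∑' j : ℕ, f (gU (k, j)) =
        (-(x * y ^ 2) * ((x * y) ^ 2) ^ k) * (1 - -y)⁻¹ := by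
      intro k
      rw [tsum_congr (heU k), hgeo (-y) (by simpa using hy')]
    rw [tsum_congr this]
    have := hgeo ((x * y) ^ 2) hxy2 (-(x * y ^ 2) * (1 - -y)⁻¹)
    calc ∑' k : ℕ, -(x * y ^ 2) * ((x * y) ^ 2) ^ k * (1 - -y)⁻¹
        = ∑' k : ℕ, (-(x * y ^ 2) * (1 - -y)⁻¹) * ((x * y) ^ 2) ^ k := by
          exact tsum_congr fun k => by ring
      _ = -(x * y ^ 2) * (1 - -y)⁻¹ * (1 - (x * y) ^ 2)⁻¹ := this
      _ = -(x * y ^ 2) * (1 - (x * y) ^ 2)⁻¹ * (1 - -y)⁻¹ := by ring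
  have hC : ∑' q : ℕ × ℕ, f (gL q) =
      -(x ^ 2 * y) * (1 - (x * y) ^ 2)⁻¹ * (1 - -x)⁻¹ := by
    have heL : ∀ k j : ℕ, f (gL (k, j)) =
        (-(x ^ 2 * y) * ((x * y) ^ 2) ^ k) * (-x) ^ j := by
      intro k j
      show (-x) ^ (2 * k + 2 + j) * (-y) ^ (2 * k + 1) = _
      rw [pow_add (-x) (2 * k + 2) j]
      linear_combination ((-x) ^ j * (-x) * (-x) * (-y)) * hkey k
    have h1 : ∀ k : ℕ, Summable fun j : ℕ => f (gL (k, j)) := by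
      intro k
      refine Summable.congr ?_ fun j => (heL k j).symm
      exact (summable_geometric_of_norm_lt_one (x := -x) (by rw [norm_neg]; exact hx')).mul_left (-(x ^ 2 * y) * ((x * y) ^ 2) ^ k)
    rw [Summable.tsum_prod' (f := fun q : ℕ × ℕ => f (gL q)) hLsum h1]
    have : ∀ k : ℕ, ∑' j : ℕ, f (gL (k, j)) =
        (-(x ^ 2 * y) * ((x * y) ^ 2) ^ k) * (1 - -x)⁻¹ := by
      intro k
      rw [tsum_congr (heL k), hgeo (-x) (by simpa using hx')]
    rw [tsum_congr this]
    have := hgeo ((x * y) ^ 2) hxy2 (-(x ^ 2 * y) * (1 - -x)⁻¹)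
    calc ∑' k : ℕ, -(x ^ 2 * y) * ((x * y) ^ 2) ^ k * (1 - -x)⁻¹
        = ∑' k : ℕ, (-(x ^ 2 * y) * (1 - -x)⁻¹) * ((x * y) ^ 2) ^ k := by
          exact tsum_congr fun k => by ring
      _ = -(x ^ 2 * y) * (1 - -x)⁻¹ * (1 - (x * y) ^ 2)⁻¹ := this
      _ = -(x ^ 2 * y) * (1 - (x * y) ^ 2)⁻¹ * (1 - -x)⁻¹ := by ring
  -- put it together
  have hmain : (∑' p : {p : ℕ × ℕ // 0 < p.1 ∧ 0 < p.2 ∧ Odd (min p.1 p.2)},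
      (-1 : ℂ) ^ (p.1.1 + p.1.2) * x ^ p.1.1 * y ^ p.1.2) =
      ∑' p : ↥{p : ℕ × ℕ | 0 < p.1 ∧ 0 < p.2 ∧ Odd (min p.1 p.2)}, f ↑p := by
    exact tsum_congr fun p => hterm p.1
  rw [hmain, hSet,
    Summable.tsum_union_disjoint hd2 (hf.subtype _) (hf.subtype _),
    Summable.tsum_union_disjoint hd1 (hf.subtype _) (hf.subtype _),
    tsum_range f hgD_inj, tsum_range f hgU_inj, tsum_range f hgL_inj,
    hA, hB, hC]
  have hny : (1 : ℂ) - -y = 1 + y := by ring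
  have hnx : (1 : ℂ) - -x = 1 + x := by ring
  rw [hny, hnx]
  have h2' : (1 : ℂ) - x ^ 2 * y ^ 2 ≠ 0 := by rw [← mul_pow]; exact h2
  field_simp
  ring
end

section
/- For every positive integer d, the number of quadruples (a, b, m, n) of positive integers satisfying m a + n b = d, min(a,b) odd, and a + b odd, equals the number of quadruples (a, b, m, n) of positive integers satisfying m a + n b = d, min(a,b) odd, a + b even, and m ≠ n. (Explicitly, the map sending (a,b,m,n) with a+b even and m ≠ n to (a+b, b, m, n-m) if n > m and to (a, a+b, m-n, n) if m > n is a bijection onto the set of quadruples with a+b odd, with inverse sending (a,b,m,n) with a+b odd to (a-b, b, m, m+n) if a > b and to (a, b-a, m+n, n) if b > a.) -/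
private def pbF (x : ℕ × ℕ × ℕ × ℕ) : ℕ × ℕ × ℕ × ℕ :=
  if x.2.2.1 < x.2.2.2 then (x.1 + x.2.1, x.2.1, x.2.2.1, x.2.2.2 - x.2.2.1)
  else (x.1, x.1 + x.2.1, x.2.2.1 - x.2.2.2, x.2.2.2)

private def pbG (x : ℕ × ℕ × ℕ × ℕ) : ℕ × ℕ × ℕ × ℕ :=
  if x.2.1 < x.1 then (x.1 - x.2.1, x.2.1, x.2.2.1, x.2.2.1 + x.2.2.2)
  else (x.1, x.2.1 - x.1, x.2.2.1 + x.2.2.2, x.2.2.2)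

/-- The parity bijection count in the paper's elementary proof of the ℙ² identity:
for every positive integer `d`, the number of quadruples `(a,b,m,n)` of positive integers
with `m a + n b = d`, `min(a,b)` odd, and `a + b` odd, equals the number of quadruples
`(a,b,m,n)` of positive integers with `m a + n b = d`, `min(a,b)` odd, `a + b` even and
`m ≠ n`. -/
theorem parity_bijection_count (d : ℕ) (hd : 0 < d) :
    {x : ℕ × ℕ × ℕ × ℕ | 0 < x.1 ∧ 0 < x.2.1 ∧ 0 < x.2.2.1 ∧ 0 < x.2.2.2 ∧
        x.2.2.1 * x.1 + x.2.2.2 * x.2.1 = d ∧ Odd (min x.1 x.2.1) ∧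
        Odd (x.1 + x.2.1)}.ncard =
    {x : ℕ × ℕ × ℕ × ℕ | 0 < x.1 ∧ 0 < x.2.1 ∧ 0 < x.2.2.1 ∧ 0 < x.2.2.2 ∧
        x.2.2.1 * x.1 + x.2.2.2 * x.2.1 = d ∧ Odd (min x.1 x.2.1) ∧
        Even (x.1 + x.2.1) ∧ x.2.2.1 ≠ x.2.2.2}.ncard := by
  set O := {x : ℕ × ℕ × ℕ × ℕ | 0 < x.1 ∧ 0 < x.2.1 ∧ 0 < x.2.2.1 ∧ 0 < x.2.2.2 ∧
        x.2.2.1 * x.1 + x.2.2.2 * x.2.1 = d ∧ Odd (min x.1 x.2.1) ∧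
        Odd (x.1 + x.2.1)} with hO
  set E := {x : ℕ × ℕ × ℕ × ℕ | 0 < x.1 ∧ 0 < x.2.1 ∧ 0 < x.2.2.1 ∧ 0 < x.2.2.2 ∧
        x.2.2.1 * x.1 + x.2.2.2 * x.2.1 = d ∧ Odd (min x.1 x.2.1) ∧
        Even (x.1 + x.2.1) ∧ x.2.2.1 ≠ x.2.2.2} with hE
  have hmemO : ∀ a b m n : ℕ, (a, b, m, n) ∈ O ↔
      (0 < a ∧ 0 < b ∧ 0 < m ∧ 0 < n ∧ m * a + n * b = d ∧ Odd (min a b) ∧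
        Odd (a + b)) := by
    intro a b m n; rw [hO]; rfl
  have hmemE : ∀ a b m n : ℕ, (a, b, m, n) ∈ E ↔
      (0 < a ∧ 0 < b ∧ 0 < m ∧ 0 < n ∧ m * a + n * b = d ∧ Odd (min a b) ∧
        Even (a + b) ∧ m ≠ n) := by
    intro a b m n; rw [hE]; rfl
  have hmapF : Set.MapsTo pbF E O := by
    rintro ⟨a, b, m, n⟩ hx
    rw [hmemE] at hx
    obtain ⟨ha, hb, hm, hn, heq, hmin, hev, hmn⟩ := hx
    by_cases h : m < n
    · have hF : pbF (a, b, m, n) = (a + b, b, m, n - m) := by simp [pbF, h]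
      rw [hF, hmemO]
      obtain ⟨k, rfl⟩ : ∃ k, n = m + k := ⟨n - m, by omega⟩
      refine ⟨by omega, hb, hm, by omega, ?_, ?_, ?_⟩
      · rw [show m + k - m = k from by omega, ← heq]; ring
      · simp only [Nat.odd_iff, Nat.even_iff] at *; omega
      · simp only [Nat.odd_iff, Nat.even_iff] at *; omega
    · have hnm : n < m := by omega
      have hF : pbF (a, b, m, n) = (a, a + b, m - n, n) := by simp [pbF, h]
      rw [hF, hmemO]
      obtain ⟨k, rfl⟩ : ∃ k, m = n + k := ⟨m - n, by omega⟩
      refine ⟨ha, by omega, by omega, hn, ?_, ?_, ?_⟩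
      · rw [show n + k - n = k from by omega, ← heq]; ring
      · simp only [Nat.odd_iff, Nat.even_iff] at *; omega
      · simp only [Nat.odd_iff, Nat.even_iff] at *; omega
  have hmapG : Set.MapsTo pbG O E := by
    rintro ⟨a, b, m, n⟩ hx
    rw [hmemO] at hx
    obtain ⟨ha, hb, hm, hn, heq, hmin, hodd⟩ := hx
    by_cases h : b < a
    · have hG : pbG (a, b, m, n) = (a - b, b, m, m + n) := by simp [pbG, h]
      rw [hG, hmemE]
      obtain ⟨k, rfl⟩ : ∃ k, a = b + k := ⟨a - b, by omega⟩
      rw [show b + k - b = k from by omega]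
      refine ⟨by omega, hb, hm, by omega, ?_, ?_, ?_, by omega⟩
      · rw [← heq]; ring
      · simp only [Nat.odd_iff, Nat.even_iff] at *; omega
      · simp only [Nat.odd_iff, Nat.even_iff] at *; omega
    · have hba : a < b := by
        simp only [Nat.odd_iff] at hmin hodd; omega
      have hG : pbG (a, b, m, n) = (a, b - a, m + n, n) := by simp [pbG, h]
      rw [hG, hmemE]
      obtain ⟨k, rfl⟩ : ∃ k, b = a + k := ⟨b - a, by omega⟩
      rw [show a + k - a = k from by omega]
      refine ⟨ha, by omega, by omega, hn, ?_, ?_, ?_, by omega⟩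
      · rw [← heq]; ring
      · simp only [Nat.odd_iff, Nat.even_iff] at *; omega
      · simp only [Nat.odd_iff, Nat.even_iff] at *; omega
  have hinv : Set.InvOn pbG pbF E O := by
    constructor
    · rintro ⟨a, b, m, n⟩ hx
      rw [hmemE] at hx
      obtain ⟨ha, hb, hm, hn, heq, hmin, hev, hmn⟩ := hx
      by_cases h : m < n
      · have hF : pbF (a, b, m, n) = (a + b, b, m, n - m) := by simp [pbF, h]
        rw [hF]
        have hG : pbG (a + b, b, m, n - m) = (a + b - b, b, m, m + (n - m)) := by
          simp [pbG, show b < a + b from by omega]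
        rw [hG]
        simp only [Prod.mk.injEq]
        exact ⟨by omega, trivial, trivial, by omega⟩
      · have hnm : n < m := by omega
        have hF : pbF (a, b, m, n) = (a, a + b, m - n, n) := by simp [pbF, h]
        rw [hF]
        have hG : pbG (a, a + b, m - n, n) = (a, a + b - a, m - n + n, n) := by
          simp [pbG, show ¬ (a + b < a) from by omega]
        rw [hG]
        simp only [Prod.mk.injEq]
        exact ⟨trivial, by omega, by omega, trivial⟩
    · rintro ⟨a, b, m, n⟩ hx
      rw [hmemO] at hx
      obtain ⟨ha, hb, hm, hn, heq, hmin, hodd⟩ := hx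
      by_cases h : b < a
      · have hG : pbG (a, b, m, n) = (a - b, b, m, m + n) := by simp [pbG, h]
        rw [hG]
        have hF : pbF (a - b, b, m, m + n) = (a - b + b, b, m, m + n - m) := by
          simp [pbF, show m < m + n from by omega]
        rw [hF]
        simp only [Prod.mk.injEq]
        exact ⟨by omega, trivial, trivial, by omega⟩
      · have hba : a < b := by
          simp only [Nat.odd_iff] at hmin hodd; omega
        have hG : pbG (a, b, m, n) = (a, b - a, m + n, n) := by simp [pbG, h]
        rw [hG]
        have hF : pbF (a, b - a, m + n, n) = (a, a + (b - a), m + n - n, n) := by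
          simp [pbF, show ¬ (m + n < n) from by omega]
        rw [hF]
        simp only [Prod.mk.injEq]
        exact ⟨trivial, by omega, by omega, trivial⟩
  have hbij : Set.BijOn pbF E O := hinv.bijOn hmapF hmapG
  rw [← hbij.image_eq, Set.ncard_image_of_injOn hbij.injOn]
end

section
/- For every positive integer d, the alternating sum ∑ (-1)^{a+b}, taken over all quadruples (a, b, m, n) of positive integers with m a + n b = d and min(a,b) odd, equals the number of triples (a, b, m) of positive integers with m(a + b) = d, min(a,b) odd, and a + b even. -/
private def phi : ℕ × ℕ × ℕ × ℕ → ℕ × ℕ × ℕ × ℕ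
  | (a, b, m, n) =>
    if a % 2 = 1 ∧ b % 2 = 1 then
      if m < n then (a + b, b, m, n - m) else (a, a + b, m - n, n)
    else if a % 2 = 1 then (a, b - a, m + n, n)
    else (a - b, b, m, n + m)

private lemma phi_eval1 (a b m n : ℕ) (h1 : a % 2 = 1) (h2 : b % 2 = 1) (h3 : m < n) :
    phi (a, b, m, n) = (a + b, b, m, n - m) := by
  simp only [phi]; split_ifs <;> first | rfl | (exfalso; omega)

private lemma phi_eval2 (a b m n : ℕ) (h1 : a % 2 = 1) (h2 : b % 2 = 1) (h3 : ¬ m < n) :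
    phi (a, b, m, n) = (a, a + b, m - n, n) := by
  simp only [phi]; split_ifs <;> first | rfl | (exfalso; omega)

private lemma phi_eval3 (a b m n : ℕ) (h1 : a % 2 = 1) (h2 : b % 2 = 0) :
    phi (a, b, m, n) = (a, b - a, m + n, n) := by
  simp only [phi]; split_ifs <;> first | rfl | (exfalso; omega)

private lemma phi_eval4 (a b m n : ℕ) (h1 : a % 2 = 0) :
    phi (a, b, m, n) = (a - b, b, m, n + m) := by
  simp only [phi]; split_ifs <;> first | rfl | (exfalso; omega)

private lemma phi_key (d a b m n : ℕ) (ha : 0 < a) (hb : 0 < b) (hm : 0 < m) (hn : 0 < n)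
    (heq : m * a + n * b = d) (hmin : min a b % 2 = 1)
    (hnd : ¬(m = n ∧ (a + b) % 2 = 0)) :
    ∃ a' b' m' n', phi (a, b, m, n) = (a', b', m', n') ∧
      0 < a' ∧ 0 < b' ∧ 0 < m' ∧ 0 < n' ∧ m' * a' + n' * b' = d ∧ min a' b' % 2 = 1 ∧
      ¬(m' = n' ∧ (a' + b') % 2 = 0) ∧ (a' + b') % 2 ≠ (a + b) % 2 ∧
      phi (a', b', m', n') = (a, b, m, n) := by
  have h2a : a % 2 = 0 ∨ a % 2 = 1 := by omega
  have h2b : b % 2 = 0 ∨ b % 2 = 1 := by omega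
  rcases h2a with haa | haa <;> rcases h2b with hbb | hbb
  · omega
  · -- a even, b odd, b < a
    have hba : b < a := by omega
    refine ⟨a - b, b, m, n + m, phi_eval4 a b m n haa, by omega, hb, hm, by omega, ?_, by omega,
      by omega, by omega, ?_⟩
    · have e2 : (a - b) + b = a := by omega
      calc m * (a - b) + (n + m) * b = m * ((a - b) + b) + n * b := by ring
        _ = d := by rw [e2]; exact heq
    · rw [phi_eval1 (a - b) b m (n + m) (by omega) hbb (by omega)]
      have e3 : a - b + b = a := by omega
      have e4 : n + m - m = n := by omega
      rw [e3, e4]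
  · -- a odd, b even, a < b
    have hab : a < b := by omega
    refine ⟨a, b - a, m + n, n, phi_eval3 a b m n haa hbb, ha, by omega, by omega, hn, ?_,
      by omega, by omega, by omega, ?_⟩
    · have e2 : a + (b - a) = b := by omega
      calc (m + n) * a + n * (b - a) = m * a + n * (a + (b - a)) := by ring
        _ = d := by rw [e2]; exact heq
    · rw [phi_eval2 a (b - a) (m + n) n haa (by omega) (by omega)]
      have e3 : a + (b - a) = b := by omega
      have e4 : m + n - n = m := by omega
      rw [e3, e4]
  · -- both odd
    have hab : (a + b) % 2 = 0 := by omega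
    have hmn : m ≠ n := fun h => hnd ⟨h, hab⟩
    rcases Nat.lt_or_ge m n with hlt | hge
    · refine ⟨a + b, b, m, n - m, phi_eval1 a b m n haa hbb hlt, by omega, hb, hm, by omega, ?_,
        by omega, by omega, by omega, ?_⟩
      · have e2 : m + (n - m) = n := by omega
        calc m * (a + b) + (n - m) * b = m * a + (m + (n - m)) * b := by ring
          _ = d := by rw [e2]; exact heq
      · rw [phi_eval4 (a + b) b m (n - m) (by omega)]
        have e3 : a + b - b = a := by omega
        have e4 : n - m + m = n := by omega
        rw [e3, e4]
    · have hgt : n < m := by omega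
      refine ⟨a, a + b, m - n, n, phi_eval2 a b m n haa hbb (by omega), ha, by omega, by omega,
        hn, ?_, by omega, by omega, by omega, ?_⟩
      · have e2 : (m - n) + n = m := by omega
        calc (m - n) * a + n * (a + b) = ((m - n) + n) * a + n * b := by ring
          _ = d := by rw [e2]; exact heq
      · rw [phi_eval3 a (a + b) (m - n) n haa (by omega)]
        have e3 : a + b - a = b := by omega
        have e4 : m - n + n = m := by omega
        rw [e3, e4]

private lemma neg_one_pow_add_eq_zero {s t : ℕ} (h : s % 2 ≠ t % 2) :
    (-1 : ℤ) ^ s + (-1 : ℤ) ^ t = 0 := by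
  rcases Nat.even_or_odd s with hs | hs
  · have ht : Odd t := by rw [Nat.even_iff] at hs; rw [Nat.odd_iff]; omega
    rw [hs.neg_one_pow, ht.neg_one_pow]; ring
  · have ht : Even t := by rw [Nat.odd_iff] at hs; rw [Nat.even_iff]; omega
    rw [hs.neg_one_pow, ht.neg_one_pow]; ring


/-- The intermediate counting identity in the paper's elementary proof of the ℙ² identity:
for every positive integer `d`, the alternating sum `∑ (-1)^{a+b}` over all quadruples
`(a,b,m,n)` of positive integers with `m a + n b = d` and `min(a,b)` odd equals the number
of triples `(a,b,m)` of positive integers with `m (a+b) = d`, `min(a,b)` odd and `a + b`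
even. -/
theorem alternating_sum_eq_diagonal_count (d : ℕ) (hd : 0 < d) :
    (∑ᶠ x ∈ {x : ℕ × ℕ × ℕ × ℕ | 0 < x.1 ∧ 0 < x.2.1 ∧ 0 < x.2.2.1 ∧ 0 < x.2.2.2 ∧
        x.2.2.1 * x.1 + x.2.2.2 * x.2.1 = d ∧ Odd (min x.1 x.2.1)},
      ((-1 : ℤ) ^ (x.1 + x.2.1))) =
    ({p : ℕ × ℕ × ℕ | 0 < p.1 ∧ 0 < p.2.1 ∧ 0 < p.2.2 ∧
        p.2.2 * (p.1 + p.2.1) = d ∧ Odd (min p.1 p.2.1) ∧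
        Even (p.1 + p.2.1)}.ncard : ℤ) := by
  classical
  set F : Finset (ℕ × ℕ × ℕ × ℕ) :=
    (Finset.range (d + 1) ×ˢ Finset.range (d + 1) ×ˢ Finset.range (d + 1) ×ˢ
        Finset.range (d + 1)).filter
      (fun x => 0 < x.1 ∧ 0 < x.2.1 ∧ 0 < x.2.2.1 ∧ 0 < x.2.2.2 ∧
        x.2.2.1 * x.1 + x.2.2.2 * x.2.1 = d ∧ Odd (min x.1 x.2.1)) with hF
  set G : Finset (ℕ × ℕ × ℕ) :=
    (Finset.range (d + 1) ×ˢ Finset.range (d + 1) ×ˢ Finset.range (d + 1)).filter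
      (fun p => 0 < p.1 ∧ 0 < p.2.1 ∧ 0 < p.2.2 ∧
        p.2.2 * (p.1 + p.2.1) = d ∧ Odd (min p.1 p.2.1) ∧ Even (p.1 + p.2.1)) with hG
  have hmemF : ∀ a b m n : ℕ, 0 < a → 0 < b → 0 < m → 0 < n → m * a + n * b = d →
      Odd (min a b) → (a, b, m, n) ∈ F := by
    intro a b m n ha hb hm hn heq hmin
    have b1 : a ≤ m * a := Nat.le_mul_of_pos_left a hm
    have b2 : b ≤ n * b := Nat.le_mul_of_pos_left b hn
    have b3 : m ≤ m * a := Nat.le_mul_of_pos_right m ha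
    have b4 : n ≤ n * b := Nat.le_mul_of_pos_right n hb
    rw [hF]
    refine Finset.mem_filter.mpr ⟨?_, ha, hb, hm, hn, heq, hmin⟩
    refine Finset.mem_product.mpr ⟨Finset.mem_range.mpr (show a < d + 1 by omega),
      Finset.mem_product.mpr ⟨Finset.mem_range.mpr (show b < d + 1 by omega),
      Finset.mem_product.mpr ⟨Finset.mem_range.mpr (show m < d + 1 by omega),
      Finset.mem_range.mpr (show n < d + 1 by omega)⟩⟩⟩
  have hmemF' : ∀ x : ℕ × ℕ × ℕ × ℕ, x ∈ F →
      0 < x.1 ∧ 0 < x.2.1 ∧ 0 < x.2.2.1 ∧ 0 < x.2.2.2 ∧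
        x.2.2.1 * x.1 + x.2.2.2 * x.2.1 = d ∧ Odd (min x.1 x.2.1) := by
    intro x hx
    exact (Finset.mem_filter.mp hx).2
  have hSA : {x : ℕ × ℕ × ℕ × ℕ | 0 < x.1 ∧ 0 < x.2.1 ∧ 0 < x.2.2.1 ∧ 0 < x.2.2.2 ∧
      x.2.2.1 * x.1 + x.2.2.2 * x.2.1 = d ∧ Odd (min x.1 x.2.1)} = ↑F := by
    ext ⟨a, b, m, n⟩
    constructor
    · rintro ⟨ha, hb, hm, hn, heq, hmin⟩
      exact hmemF a b m n ha hb hm hn heq hmin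
    · intro hx
      exact hmemF' _ hx
  have hSB : {p : ℕ × ℕ × ℕ | 0 < p.1 ∧ 0 < p.2.1 ∧ 0 < p.2.2 ∧
      p.2.2 * (p.1 + p.2.1) = d ∧ Odd (min p.1 p.2.1) ∧ Even (p.1 + p.2.1)} = ↑G := by
    ext ⟨a, b, m⟩
    constructor
    · rintro ⟨ha, hb, hm, heq, hmin, hev⟩
      have ha2 : 0 < a := ha
      have hb2 : 0 < b := hb
      have hm2 : 0 < m := hm
      have heq2 : m * (a + b) = d := heq
      have b1 : a + b ≤ m * (a + b) := Nat.le_mul_of_pos_left _ hm2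
      have b3 : m ≤ m * (a + b) := Nat.le_mul_of_pos_right m (by omega)
      rw [hG]
      refine Finset.mem_coe.mpr (Finset.mem_filter.mpr ⟨?_, ha, hb, hm, heq, hmin, hev⟩)
      refine Finset.mem_product.mpr ⟨Finset.mem_range.mpr (show a < d + 1 by omega),
        Finset.mem_product.mpr ⟨Finset.mem_range.mpr (show b < d + 1 by omega),
        Finset.mem_range.mpr (show m < d + 1 by omega)⟩⟩
    · intro hx
      exact (Finset.mem_filter.mp hx).2
  rw [hSA, hSB, finsum_mem_coe_finset, Set.ncard_coe_finset]
  have hdec : DecidablePred (fun x : ℕ × ℕ × ℕ × ℕ =>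
      x.2.2.1 = x.2.2.2 ∧ (x.1 + x.2.1) % 2 = 0) := fun _ => inferInstance
  rw [← Finset.sum_filter_add_sum_filter_not F
    (fun x => x.2.2.1 = x.2.2.2 ∧ (x.1 + x.2.1) % 2 = 0)]
  have hdiag : ∑ x ∈ F.filter (fun x => x.2.2.1 = x.2.2.2 ∧ (x.1 + x.2.1) % 2 = 0),
      ((-1 : ℤ) ^ (x.1 + x.2.1)) =
      ((F.filter (fun x => x.2.2.1 = x.2.2.2 ∧ (x.1 + x.2.1) % 2 = 0)).card : ℤ) := by
    rw [Finset.sum_congr rfl (fun x hx => ?_), Finset.sum_const, nsmul_eq_mul, mul_one]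
    have hx2 : x.2.2.1 = x.2.2.2 ∧ (x.1 + x.2.1) % 2 = 0 := (Finset.mem_filter.mp hx).2
    exact Even.neg_one_pow (Nat.even_iff.mpr hx2.2)
  have hcard : (F.filter (fun x => x.2.2.1 = x.2.2.2 ∧ (x.1 + x.2.1) % 2 = 0)).card
      = G.card := by
    apply Finset.card_bij (fun x _ => (x.1, x.2.1, x.2.2.1))
    · rintro ⟨a, b, m, n⟩ hx
      have hpx : m = n ∧ (a + b) % 2 = 0 := (Finset.mem_filter.mp hx).2
      obtain ⟨ha, hb, hm, hn, heq, hmin⟩ := hmemF' _ (Finset.mem_filter.mp hx).1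
      have b1 : a + b ≤ m * (a + b) := Nat.le_mul_of_pos_left _ hm
      have b3 : m ≤ m * (a + b) := Nat.le_mul_of_pos_right m (by omega)
      have heq' : m * (a + b) = d := by
        obtain ⟨rfl, -⟩ := hpx
        calc m * (a + b) = m * a + m * b := by ring
          _ = d := heq
      rw [hG]
      refine Finset.mem_filter.mpr ⟨?_, ha, hb, hm, heq', hmin, Nat.even_iff.mpr hpx.2⟩
      refine Finset.mem_product.mpr ⟨Finset.mem_range.mpr (show a < d + 1 by omega),
        Finset.mem_product.mpr ⟨Finset.mem_range.mpr (show b < d + 1 by omega),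
        Finset.mem_range.mpr (show m < d + 1 by omega)⟩⟩
    · rintro ⟨a, b, m, n⟩ hx ⟨a', b', m', n'⟩ hx' hEq
      have hpx : m = n ∧ (a + b) % 2 = 0 := (Finset.mem_filter.mp hx).2
      have hpx' : m' = n' ∧ (a' + b') % 2 = 0 := (Finset.mem_filter.mp hx').2
      simp only [Prod.mk.injEq] at hEq ⊢
      obtain ⟨h1, h2, h3⟩ := hEq
      exact ⟨h1, h2, h3, by omega⟩
    · rintro ⟨a, b, m⟩ ht
      have hgt : 0 < a ∧ 0 < b ∧ 0 < m ∧ m * (a + b) = d ∧ Odd (min a b) ∧ Even (a + b) :=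
        (Finset.mem_filter.mp ht).2
      obtain ⟨ha, hb, hm, heq, hmin, hev⟩ := hgt
      have heq' : m * a + m * b = d := by rw [← heq]; ring
      refine ⟨(a, b, m, m), Finset.mem_filter.mpr ⟨hmemF a b m m ha hb hm hm heq' hmin,
        rfl, Nat.even_iff.mp hev⟩, rfl⟩
  have hoff : ∑ x ∈ F.filter (fun x => ¬ (x.2.2.1 = x.2.2.2 ∧ (x.1 + x.2.1) % 2 = 0)),
      ((-1 : ℤ) ^ (x.1 + x.2.1)) = 0 := by
    apply Finset.sum_involution (fun x _ => phi x)
    · rintro ⟨a, b, m, n⟩ hx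
      have hnd : ¬ (m = n ∧ (a + b) % 2 = 0) := (Finset.mem_filter.mp hx).2
      obtain ⟨ha, hb, hm, hn, heq, hmin⟩ := hmemF' _ (Finset.mem_filter.mp hx).1
      obtain ⟨a', b', m', n', he, -, -, -, -, -, -, -, hpar, -⟩ :=
        phi_key d a b m n ha hb hm hn heq (Nat.odd_iff.mp hmin) hnd
      rw [he]
      exact neg_one_pow_add_eq_zero (fun hcc => hpar hcc.symm)
    · rintro ⟨a, b, m, n⟩ hx -
      have hnd : ¬ (m = n ∧ (a + b) % 2 = 0) := (Finset.mem_filter.mp hx).2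
      obtain ⟨ha, hb, hm, hn, heq, hmin⟩ := hmemF' _ (Finset.mem_filter.mp hx).1
      obtain ⟨a', b', m', n', he, -, -, -, -, -, -, -, hpar, -⟩ :=
        phi_key d a b m n ha hb hm hn heq (Nat.odd_iff.mp hmin) hnd
      rw [he]
      intro hcontra
      simp only [Prod.mk.injEq] at hcontra
      omega
    · rintro ⟨a, b, m, n⟩ hx
      have hnd : ¬ (m = n ∧ (a + b) % 2 = 0) := (Finset.mem_filter.mp hx).2
      obtain ⟨ha, hb, hm, hn, heq, hmin⟩ := hmemF' _ (Finset.mem_filter.mp hx).1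
      obtain ⟨a', b', m', n', he, ha', hb', hm', hn', heq', hmin', hnd', hpar, -⟩ :=
        phi_key d a b m n ha hb hm hn heq (Nat.odd_iff.mp hmin) hnd
      rw [he]
      exact Finset.mem_filter.mpr
        ⟨hmemF a' b' m' n' ha' hb' hm' hn' heq' (Nat.odd_iff.mpr hmin'), hnd'⟩
    · rintro ⟨a, b, m, n⟩ hx
      have hnd : ¬ (m = n ∧ (a + b) % 2 = 0) := (Finset.mem_filter.mp hx).2
      obtain ⟨ha, hb, hm, hn, heq, hmin⟩ := hmemF' _ (Finset.mem_filter.mp hx).1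
      obtain ⟨a', b', m', n', he, -, -, -, -, -, -, -, -, hinv⟩ :=
        phi_key d a b m n ha hb hm hn heq (Nat.odd_iff.mp hmin) hnd
      rw [he, hinv]
  rw [hdiag, hoff, hcard, add_zero]
end

section
/- For every positive integer r, the number of triples (a, b, m) of positive integers with m(a + b) = 2r, min(a,b) odd, and a + b even equals σ(r), the sum of the positive divisors of r. Moreover, for odd positive integers d there are no triples (a, b, m) of positive integers with m(a + b) = d, min(a,b) odd, and a + b even. -/
/-- The final counting step in the paper's elementary proof of the ℙ² identity:
for every positive integer `r`, the number of triples `(a,b,m)` of positive integers with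
`m (a+b) = 2r`, `min(a,b)` odd and `a + b` even equals `σ(r)`, the sum of the positive
divisors of `r`; and for odd positive integers `d` there are no triples `(a,b,m)` of
positive integers with `m (a+b) = d`, `min(a,b)` odd and `a + b` even. -/
theorem diagonal_count_eq_sigma :
    (∀ r : ℕ, 0 < r →
      {p : ℕ × ℕ × ℕ | 0 < p.1 ∧ 0 < p.2.1 ∧ 0 < p.2.2 ∧
        p.2.2 * (p.1 + p.2.1) = 2 * r ∧ Odd (min p.1 p.2.1) ∧
        Even (p.1 + p.2.1)}.ncard = ∑ k ∈ r.divisors, k) ∧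
    (∀ d : ℕ, Odd d →
      {p : ℕ × ℕ × ℕ | 0 < p.1 ∧ 0 < p.2.1 ∧ 0 < p.2.2 ∧
        p.2.2 * (p.1 + p.2.1) = d ∧ Odd (min p.1 p.2.1) ∧
        Even (p.1 + p.2.1)} = ∅) := by
  constructor
  · intro r hr
    classical
    set F : Finset (ℕ × ℕ × ℕ) :=
      r.divisors.biUnion (fun s =>
        (Finset.range s).image (fun j => (2*j+1, 2*s - (2*j+1), r / s))) with hF
    have hset : {p : ℕ × ℕ × ℕ | 0 < p.1 ∧ 0 < p.2.1 ∧ 0 < p.2.2 ∧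
        p.2.2 * (p.1 + p.2.1) = 2 * r ∧ Odd (min p.1 p.2.1) ∧
        Even (p.1 + p.2.1)} = ↑F := by
      ext ⟨a, b, m⟩
      simp only [Set.mem_setOf_eq, hF, Finset.coe_biUnion, Set.mem_iUnion,
        Finset.mem_coe, Finset.mem_image, Finset.mem_range, Nat.mem_divisors,
        Prod.mk.injEq]
      constructor
      · rintro ⟨ha, hb, hm, hmul, hmin, heven⟩
        have hodd : Odd a ∧ Odd b := by
          obtain ⟨v, hv⟩ := heven
          rcases min_cases a b with ⟨h, _⟩ | ⟨h, _⟩ <;> rw [h] at hmin <;>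
            obtain ⟨u, hu⟩ := hmin
          · exact ⟨⟨u, hu⟩, ⟨v - u - 1, by omega⟩⟩
          · exact ⟨⟨v - u - 1, by omega⟩, ⟨u, hu⟩⟩
        obtain ⟨j, hj⟩ := hodd.1
        obtain ⟨s, hs⟩ := heven
        have hms : m * s = r := by
          have h2 : m * (a + b) = m * (s + s) := by rw [hs]
          have h3 : m * (s + s) = 2 * (m * s) := by ring
          omega
        have hs0 : 0 < s := by omega
        refine ⟨s, ⟨⟨m, by rw [← hms]; ring⟩, by omega⟩, j, by omega, by omega, by omega, ?_⟩
        rw [← hms, Nat.mul_div_cancel _ hs0]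
      · rintro ⟨s, ⟨⟨m', hm'⟩, hr0⟩, j, hjs, ha, hb, hm⟩
        have hs0 : 0 < s := by omega
        have hm'0 : 0 < m' := by
          rcases Nat.eq_zero_or_pos m' with h | h
          · rw [h, Nat.mul_zero] at hm'; omega
          · exact h
        have hdiv : r / s = m' := by rw [hm', Nat.mul_div_cancel_left _ hs0]
        refine ⟨by omega, by omega, by omega, ?_, ?_, ?_⟩
        · have : a + b = 2 * s := by omega
          rw [this, ← hm, hdiv, hm']; ring
        · rcases min_cases a b with ⟨h, _⟩ | ⟨h, _⟩ <;> rw [h]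
          · exact ⟨j, by omega⟩
          · exact ⟨s - j - 1, by omega⟩
        · exact ⟨s, by omega⟩
    rw [hset, Set.ncard_coe_finset, hF]
    rw [Finset.card_biUnion]
    · refine Finset.sum_congr rfl fun s hs => ?_
      rw [Finset.card_image_of_injective _ (fun x y h => by
          simp only [Prod.mk.injEq] at h; omega), Finset.card_range]
    · intro s hs t ht hst
      simp only [Finset.disjoint_left, Finset.mem_image, Finset.mem_range]
      rintro p ⟨j, hj, rfl⟩ ⟨k, hk, h⟩
      simp only [Prod.mk.injEq] at h
      omega
  · intro d hd
    ext ⟨a, b, m⟩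
    simp only [Set.mem_setOf_eq, Set.mem_empty_iff_false, iff_false, not_and]
    intro ha hb hm hmul hmin heven
    have : Even d := hmul ▸ heven.mul_left m
    exact (Nat.not_even_iff_odd.mpr hd) this
end

section
/- Let τ be in the upper half-plane, set q = e^{2πiτ}, let z ∈ ℂ with y = e^{2πiz}, and let x ∈ ℂ be such that x ∉ 2πi·ℤ and θ(x/(2πi), τ) ≠ 0. Then e^{-πiz} · (x/(1 - e^{-x})) · ∏_{n≥1} [(1 - y q^{n-1} e^{-x})(1 - y^{-1} q^n e^{x})] / [(1 - q^n e^{-x})(1 - q^n e^{x})] = x · θ(x/(2πi) - z, τ) / θ(x/(2πi), τ), where the infinite product converges absolutely. -/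
open Complex Filter Finset

lemma hasProd_zero_of_eq_zero {f : ℕ → ℂ} {k : ℕ} (h : f k = 0) : HasProd f 0 := by
  have hev : ∀ᶠ s : Finset ℕ in atTop, (0 : ℂ) = ∏ i ∈ s, f i := by
    filter_upwards [eventually_ge_atTop {k}] with s hs
    exact (Finset.prod_eq_zero (hs (Finset.mem_singleton_self k)) h).symm
  exact Filter.Tendsto.congr' hev tendsto_const_nhds

lemma multipliable_one_sub_mul (c q : ℂ) (hq : ‖q‖ < 1) :
    Multipliable fun n : ℕ => 1 - c * q ^ n := by
  have hnorm : Summable fun n : ℕ => ‖c * q ^ n‖ := by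
    have := (summable_geometric_of_lt_one (norm_nonneg q) hq).mul_left ‖c‖
    exact this.congr fun n => by rw [norm_mul, norm_pow]
  by_cases hz : ∀ n : ℕ, 1 - c * q ^ n ≠ 0
  · have hlog : Summable fun n : ℕ => Complex.log (1 - c * q ^ n) := by
      have hsmall : ∀ᶠ n : ℕ in atTop, ‖c * q ^ n‖ ≤ 1 / 2 := by
        filter_upwards [hnorm.tendsto_atTop_zero.eventually_le_const
          (by norm_num : (0:ℝ) < 1/2)] with n hn
        exact hn
      refine Summable.of_norm_bounded_eventually_nat (g := fun n => 3/2 * ‖c * q ^ n‖)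
        (hnorm.mul_left _) ?_
      filter_upwards [hsmall] with n hn
      have := Complex.norm_log_one_add_half_le_self (z := -(c * q ^ n)) (by simpa using hn)
      simpa [sub_eq_add_neg] using this
    exact Complex.multipliable_of_summable_log hlog
  · push_neg at hz
    obtain ⟨k, hk⟩ := hz
    exact ⟨0, hasProd_zero_of_eq_zero hk⟩

lemma hasProd_inv_of_hasProd {f : ℕ → ℂ} {a : ℂ} (hf : HasProd f a) (ha : a ≠ 0) :
    HasProd (fun n => (f n)⁻¹) a⁻¹ := by
  have : Filter.Tendsto (fun s : Finset ℕ => (∏ i ∈ s, f i)⁻¹) atTop (nhds a⁻¹) :=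
    Filter.Tendsto.inv₀ hf ha
  refine this.congr fun s => ?_
  exact (Finset.prod_inv_distrib _).symm

lemma sin_identity (x z : ℂ) :
    (1 - Complex.exp (-x)) * Complex.sin ((Real.pi:ℂ) * (x / (2*(Real.pi:ℂ)*I) - z)) =
    Complex.exp (-((Real.pi:ℂ)*I*z)) * (1 - Complex.exp (2*(Real.pi:ℂ)*I*z) * Complex.exp (-x)) *
      Complex.sin ((Real.pi:ℂ) * (x / (2*(Real.pi:ℂ)*I))) := by
  have hπ : ((Real.pi : ℂ)) ≠ 0 := by
    simpa using Real.pi_ne_zero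
  have hI := Complex.I_ne_zero
  rw [Complex.sin, Complex.sin]
  have e1 : -((Real.pi:ℂ) * (x / (2*(Real.pi:ℂ)*I) - z)) * I = -(x/2) + (Real.pi:ℂ)*I*z := by
    field_simp
    ring
  have e2 : ((Real.pi:ℂ) * (x / (2*(Real.pi:ℂ)*I) - z)) * I = x/2 - (Real.pi:ℂ)*I*z := by
    field_simp
  have e3 : -((Real.pi:ℂ) * (x / (2*(Real.pi:ℂ)*I))) * I = -(x/2) := by
    field_simp
  have e4 : ((Real.pi:ℂ) * (x / (2*(Real.pi:ℂ)*I))) * I = x/2 := by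
    field_simp
  rw [e1, e2, e3, e4]
  have hx2 : Complex.exp (-x) = (Complex.exp (x/2) * Complex.exp (x/2))⁻¹ := by
    rw [← Complex.exp_add, ← Complex.exp_neg]
    ring_nf
  have hz2 : Complex.exp (2*(Real.pi:ℂ)*I*z)
      = Complex.exp ((Real.pi:ℂ)*I*z) * Complex.exp ((Real.pi:ℂ)*I*z) := by
    rw [← Complex.exp_add]; ring_nf
  have ha : Complex.exp (-(x/2) + (Real.pi:ℂ)*I*z)
      = (Complex.exp (x/2))⁻¹ * Complex.exp ((Real.pi:ℂ)*I*z) := by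
    rw [Complex.exp_add, Complex.exp_neg]
  have hb : Complex.exp (x/2 - (Real.pi:ℂ)*I*z)
      = Complex.exp (x/2) * (Complex.exp ((Real.pi:ℂ)*I*z))⁻¹ := by
    rw [Complex.exp_sub]; exact div_eq_mul_inv _ _
  have hc : Complex.exp (-((Real.pi:ℂ)*I*z)) = (Complex.exp ((Real.pi:ℂ)*I*z))⁻¹ :=
    Complex.exp_neg _
  have hd : Complex.exp (-(x/2)) = (Complex.exp (x/2))⁻¹ := Complex.exp_neg _
  rw [hx2, hz2, ha, hb, hc, hd]
  have hs : Complex.exp (x/2) ≠ 0 := Complex.exp_ne_zero _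
  have ht : Complex.exp ((Real.pi:ℂ)*I*z) ≠ 0 := Complex.exp_ne_zero _
  field_simp
  ring

/-- The Jacobi theta function `θ_{1,1}`, defined for `τ` in the upper half-plane and `z ∈ ℂ`
by the product `θ(z,τ) = q^{1/8} (2 sin πz) ∏_{l ≥ 1} (1-q^l) ∏_{l ≥ 1} (1-q^l e^{2πiz})(1-q^l e^{-2πiz})`
with `q = e^{2πiτ}` (so `q^{1/8} = e^{πiτ/4}`). -/
noncomputable def jTheta (z τ : ℂ) : ℂ :=
  Complex.exp ((Real.pi : ℂ) * I * τ / 4) * (2 * Complex.sin ((Real.pi : ℂ) * z)) *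
    (∏' l : ℕ, (1 - Complex.exp (2 * (Real.pi : ℂ) * I * τ) ^ (l + 1))) *
    ∏' l : ℕ,
      ((1 - Complex.exp (2 * (Real.pi : ℂ) * I * τ) ^ (l + 1) *
          Complex.exp (2 * (Real.pi : ℂ) * I * z)) *
       (1 - Complex.exp (2 * (Real.pi : ℂ) * I * τ) ^ (l + 1) *
          Complex.exp (-(2 * (Real.pi : ℂ) * I) * z)))

set_option maxHeartbeats 1000000 in
/-- Proposition 3.1 of the paper (characteristic series computation): for `τ` in the upper
half-plane, `q = e^{2πiτ}`, `y = e^{2πiz}`, and `x ∉ 2πi·ℤ` with `θ(x/(2πi), τ) ≠ 0`,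
`e^{-πiz} (x/(1-e^{-x})) ∏_{n ≥ 1} (1 - y q^{n-1} e^{-x})(1 - y⁻¹ q^n e^x) /
  ((1 - q^n e^{-x})(1 - q^n e^x)) = x θ(x/(2πi) - z, τ) / θ(x/(2πi), τ)`,
where the infinite product converges absolutely. -/
theorem characteristic_series_as_theta_ratio (τ z x q y : ℂ) (hτ : 0 < τ.im)
    (hq : q = Complex.exp (2 * (Real.pi : ℂ) * I * τ))
    (hy : y = Complex.exp (2 * (Real.pi : ℂ) * I * z))
    (hx : ∀ m : ℤ, x ≠ 2 * (Real.pi : ℂ) * I * m)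
    (hθ : jTheta (x / (2 * (Real.pi : ℂ) * I)) τ ≠ 0) :
    Multipliable (fun n : ℕ =>
      ((1 - y * q ^ n * Complex.exp (-x)) * (1 - y⁻¹ * q ^ (n + 1) * Complex.exp x)) /
        ((1 - q ^ (n + 1) * Complex.exp (-x)) * (1 - q ^ (n + 1) * Complex.exp x))) ∧
    Complex.exp (-((Real.pi : ℂ) * I * z)) * (x / (1 - Complex.exp (-x))) *
      (∏' n : ℕ,
        ((1 - y * q ^ n * Complex.exp (-x)) * (1 - y⁻¹ * q ^ (n + 1) * Complex.exp x)) /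
          ((1 - q ^ (n + 1) * Complex.exp (-x)) * (1 - q ^ (n + 1) * Complex.exp x))) =
      x * jTheta (x / (2 * (Real.pi : ℂ) * I) - z) τ /
        jTheta (x / (2 * (Real.pi : ℂ) * I)) τ := by
  have hπ : ((Real.pi : ℂ)) ≠ 0 := by simpa using Real.pi_ne_zero
  have hI := Complex.I_ne_zero
  have h2πI : (2 * (Real.pi : ℂ) * I) ≠ 0 := by
    simp [hπ, hI]
  -- |q| < 1
  have hqnorm : ‖q‖ < 1 := by
    rw [hq, Complex.norm_exp]
    have hre : (2 * (Real.pi : ℂ) * I * τ).re = -(2 * Real.pi * τ.im) := by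
      simp [Complex.mul_re, Complex.mul_im]
    rw [hre]
    apply Real.exp_lt_one_iff.mpr
    have := Real.pi_pos
    nlinarith
  -- basic exp rewrites
  have hwx : 2 * (Real.pi : ℂ) * I * (x / (2 * (Real.pi : ℂ) * I)) = x := by
    field_simp
    all_goals ring
  have eb : Complex.exp (2 * (Real.pi : ℂ) * I * (x / (2 * (Real.pi : ℂ) * I)))
      = Complex.exp x := by rw [hwx]
  have ea : Complex.exp (-(2 * (Real.pi : ℂ) * I) * (x / (2 * (Real.pi : ℂ) * I)))
      = Complex.exp (-x) := by
    congr 1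
    field_simp
    all_goals ring
  have ebz : Complex.exp (2 * (Real.pi : ℂ) * I * (x / (2 * (Real.pi : ℂ) * I) - z))
      = Complex.exp x * y⁻¹ := by
    rw [show 2 * (Real.pi : ℂ) * I * (x / (2 * (Real.pi : ℂ) * I) - z)
        = x - 2 * (Real.pi : ℂ) * I * z by rw [mul_sub, hwx],
      Complex.exp_sub, ← hy, div_eq_mul_inv]
  have eaz : Complex.exp (-(2 * (Real.pi : ℂ) * I) * (x / (2 * (Real.pi : ℂ) * I) - z))
      = y * Complex.exp (-x) := by
    rw [show -(2 * (Real.pi : ℂ) * I) * (x / (2 * (Real.pi : ℂ) * I) - z)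
        = 2 * (Real.pi : ℂ) * I * z + -x by rw [neg_mul, mul_sub, hwx]; ring,
      Complex.exp_add, ← hy]
  -- nonvanishing of 1 - exp(-x)
  have h1a : (1 : ℂ) - Complex.exp (-x) ≠ 0 := by
    intro h
    have hex : Complex.exp (-x) = 1 := by linear_combination -h
    obtain ⟨n, hn⟩ := Complex.exp_eq_one_iff.mp hex
    exact hx (-n) (by push_cast; linear_combination -hn)
  -- multipliability of the basic families
  have hu : Multipliable (fun n : ℕ => 1 - y * q ^ n * Complex.exp (-x)) :=
    (multipliable_one_sub_mul (y * Complex.exp (-x)) q hqnorm).congr (fun n => by ring)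
  have husucc : Multipliable (fun n : ℕ => 1 - y * q ^ (n + 1) * Complex.exp (-x)) :=
    (multipliable_one_sub_mul (y * Complex.exp (-x) * q) q hqnorm).congr (fun n => by ring)
  have hv : Multipliable (fun n : ℕ => 1 - y⁻¹ * q ^ (n + 1) * Complex.exp x) :=
    (multipliable_one_sub_mul (y⁻¹ * Complex.exp x * q) q hqnorm).congr (fun n => by ring)
  have hcm : Multipliable (fun n : ℕ => 1 - q ^ (n + 1) * Complex.exp (-x)) :=
    (multipliable_one_sub_mul (Complex.exp (-x) * q) q hqnorm).congr (fun n => by ring)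
  have hdm : Multipliable (fun n : ℕ => 1 - q ^ (n + 1) * Complex.exp x) :=
    (multipliable_one_sub_mul (Complex.exp x * q) q hqnorm).congr (fun n => by ring)
  -- rewrite jTheta values
  simp only [jTheta, ← hq, eb, ea, ebz, eaz] at hθ ⊢
  -- split the theta products
  have hΘ0 : (∏' l : ℕ, ((1 - q ^ (l + 1) * Complex.exp x) *
        (1 - q ^ (l + 1) * Complex.exp (-x))))
      = (∏' l : ℕ, (1 - q ^ (l + 1) * Complex.exp x)) *
        (∏' l : ℕ, (1 - q ^ (l + 1) * Complex.exp (-x))) := Multipliable.tprod_mul hdm hcm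
  have hΘ1 : (∏' l : ℕ, ((1 - q ^ (l + 1) * (Complex.exp x * y⁻¹)) *
        (1 - q ^ (l + 1) * (y * Complex.exp (-x)))))
      = (∏' l : ℕ, (1 - y⁻¹ * q ^ (l + 1) * Complex.exp x)) *
        (∏' l : ℕ, (1 - y * q ^ (l + 1) * Complex.exp (-x))) := by
    rw [show (fun l : ℕ => ((1 - q ^ (l + 1) * (Complex.exp x * y⁻¹)) *
        (1 - q ^ (l + 1) * (y * Complex.exp (-x)))))
      = fun l : ℕ => ((1 - y⁻¹ * q ^ (l + 1) * Complex.exp x) *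
        (1 - y * q ^ (l + 1) * Complex.exp (-x))) from funext fun l => by ring]
    exact Multipliable.tprod_mul hv husucc
  rw [hΘ0] at hθ ⊢
  rw [hΘ1]
  -- extract nonvanishing factors from hθ
  have hE : Complex.exp ((Real.pi : ℂ) * I * τ / 4) ≠ 0 := Complex.exp_ne_zero _
  have h4 := mul_ne_zero_iff.mp hθ
  have h5 := mul_ne_zero_iff.mp h4.1
  have h6 := mul_ne_zero_iff.mp h5.1
  have hS0 : Complex.sin ((Real.pi : ℂ) * (x / (2 * (Real.pi : ℂ) * I))) ≠ 0 := by
    have := h6.2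
    intro h; exact this (by rw [h, mul_zero])
  have hPne : (∏' l : ℕ, (1 - q ^ (l + 1))) ≠ 0 := h5.2
  have hDC := mul_ne_zero_iff.mp h4.2
  have hDne : (∏' l : ℕ, (1 - q ^ (l + 1) * Complex.exp x)) ≠ 0 := hDC.1
  have hCne : (∏' l : ℕ, (1 - q ^ (l + 1) * Complex.exp (-x))) ≠ 0 := hDC.2
  -- inverses
  have hcinv := hasProd_inv_of_hasProd hcm.hasProd hCne
  have hdinv := hasProd_inv_of_hasProd hdm.hasProd hDne
  have hcinvm : Multipliable (fun n : ℕ => (1 - q ^ (n + 1) * Complex.exp (-x))⁻¹) :=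
    ⟨_, hcinv⟩
  have hdinvm : Multipliable (fun n : ℕ => (1 - q ^ (n + 1) * Complex.exp x)⁻¹) :=
    ⟨_, hdinv⟩
  -- the term of the main product, rewritten
  have hterm_eq : (fun n : ℕ =>
      ((1 - y * q ^ n * Complex.exp (-x)) * (1 - y⁻¹ * q ^ (n + 1) * Complex.exp x)) /
        ((1 - q ^ (n + 1) * Complex.exp (-x)) * (1 - q ^ (n + 1) * Complex.exp x)))
      = fun n : ℕ =>
      ((1 - y * q ^ n * Complex.exp (-x)) * (1 - y⁻¹ * q ^ (n + 1) * Complex.exp x)) *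
        ((1 - q ^ (n + 1) * Complex.exp (-x))⁻¹ * (1 - q ^ (n + 1) * Complex.exp x)⁻¹) := by
    funext n
    rw [div_eq_mul_inv, mul_inv]
  have hmult : Multipliable (fun n : ℕ =>
      ((1 - y * q ^ n * Complex.exp (-x)) * (1 - y⁻¹ * q ^ (n + 1) * Complex.exp x)) /
        ((1 - q ^ (n + 1) * Complex.exp (-x)) * (1 - q ^ (n + 1) * Complex.exp x))) := by
    rw [hterm_eq]
    exact (hu.mul hv).mul (hcinvm.mul hdinvm)
  refine ⟨hmult, ?_⟩
  -- compute the main tprod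
  have hT : (∏' n : ℕ,
      ((1 - y * q ^ n * Complex.exp (-x)) * (1 - y⁻¹ * q ^ (n + 1) * Complex.exp x)) /
        ((1 - q ^ (n + 1) * Complex.exp (-x)) * (1 - q ^ (n + 1) * Complex.exp x)))
      = ((1 - y * Complex.exp (-x)) * (∏' n : ℕ, (1 - y * q ^ (n + 1) * Complex.exp (-x)))) *
        (∏' n : ℕ, (1 - y⁻¹ * q ^ (n + 1) * Complex.exp x)) *
        ((∏' n : ℕ, (1 - q ^ (n + 1) * Complex.exp (-x)))⁻¹ *
         (∏' n : ℕ, (1 - q ^ (n + 1) * Complex.exp x))⁻¹) := by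
    rw [hterm_eq]
    rw [Multipliable.tprod_mul (hu.mul hv) (hcinvm.mul hdinvm)]
    rw [Multipliable.tprod_mul hu hv]
    rw [Multipliable.tprod_mul hcinvm hdinvm]
    rw [hcinv.tprod_eq, hdinv.tprod_eq]
    rw [tprod_eq_zero_mul' (f := fun n : ℕ => 1 - y * q ^ n * Complex.exp (-x)) husucc]
    simp
  rw [hT]
  -- sine identity
  have hsin := sin_identity x z
  rw [← hy] at hsin
  -- final algebraic verification
  set E := Complex.exp ((Real.pi : ℂ) * I * τ / 4)
  set S0 := Complex.sin ((Real.pi : ℂ) * (x / (2 * (Real.pi : ℂ) * I)))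
  set S1 := Complex.sin ((Real.pi : ℂ) * (x / (2 * (Real.pi : ℂ) * I) - z))
  set P := (∏' l : ℕ, (1 - q ^ (l + 1)))
  set A := (∏' n : ℕ, (1 - y * q ^ (n + 1) * Complex.exp (-x)))
  set V := (∏' n : ℕ, (1 - y⁻¹ * q ^ (n + 1) * Complex.exp x))
  set C := (∏' n : ℕ, (1 - q ^ (n + 1) * Complex.exp (-x)))
  set D := (∏' n : ℕ, (1 - q ^ (n + 1) * Complex.exp x))
  rw [eq_div_iff (by exact mul_ne_zero (mul_ne_zero (mul_ne_zero hE (by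
      intro h
      exact hS0 (by
        field_simp at h
        simpa using h))) hPne) (mul_ne_zero hDne hCne))]
  field_simp
  linear_combination (-(x * A * V)) * hsin
end
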